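/- arXiv:2105.00853 — 8 statements merged into one kernel-verified Lean document; each statement's English description precedes it below -/
import Mathlib

section
/- Let p ≥ 1 and n ≥ p, and let t_0 ≤ t_1 ≤ … ≤ t_{n+p} be a knot vector. Write Δt_i := t_{i+1} − t_i and T := t_n − t_p. If the knots near both ends are equidistant, i.e. Δt_i = Δt_{i+n−p} for all i = 0, …, 2p−1, then the B-spline functions satisfy the translation property: for every i = 0, …, p−1, every k = 0, …, p−1, and every t ∈ ℝ, the k-th iterated derivative of B_i^p at t equals the k-th iterated derivative of B_{n−p+i}^p at t + T (in particular, for k = 0, B_i^p(t) = B_{n−p+i}^p(t + T) for all t ∈ ℝ). -/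
/-- The B-spline functions of degree `p` for the knot sequence `t`, defined by the
Cox–de Boor recursion. `bspline t p i` is `B_i^p`. Fractions with zero denominator
are `0` (Lean's convention `x / 0 = 0`). -/
noncomputable def bspline (t : ℕ → ℝ) : ℕ → ℕ → ℝ → ℝ
  | 0, i, x => if t i ≤ x ∧ x < t (i + 1) then 1 else 0
  | p + 1, i, x =>
      (x - t i) / (t (i + p + 1) - t i) * bspline t p i x +
      (t (i + p + 2) - x) / (t (i + p + 2) - t (i + 1)) * bspline t p (i + 1) x

/-- Translation property of B-splines whose knots are equidistant near both ends
(Lemma 1 of the paper). -/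
theorem bspline_translation (p n : ℕ) (hp : 1 ≤ p) (hn : p ≤ n)
    (t : ℕ → ℝ) (hmono : ∀ i < n + p, t i ≤ t (i + 1))
    (hequi : ∀ i < 2 * p, t (i + 1) - t i = t (i + (n - p) + 1) - t (i + (n - p))) :
    ∀ i < p, ∀ k < p, ∀ s : ℝ,
      iteratedDeriv k (bspline t p i) s =
        iteratedDeriv k (bspline t p (n - p + i)) (s + (t n - t p)) := by
  set T : ℝ := t n - t p with hTdef
  -- the offset is constant along the first 2p knots
  have hd : ∀ j ≤ 2 * p, t (j + (n - p)) - t j = t (n - p) - t 0 := by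
    intro j hj
    induction j with
    | zero => simp
    | succ j ih =>
      have hj' : j < 2 * p := by omega
      have h1 := hequi j hj'
      have h2 := ih (by omega)
      have e : j + 1 + (n - p) = j + (n - p) + 1 := by omega
      rw [e]
      linarith
  have hT : ∀ j ≤ 2 * p, t (n - p + j) = t j + T := by
    intro j hj
    have hdp : t (p + (n - p)) - t p = t (n - p) - t 0 := hd p (by omega)
    have hpn : p + (n - p) = n := by omega
    rw [hpn] at hdp
    have hdj := hd j hj
    have e : n - p + j = j + (n - p) := by omega
    rw [e]
    rw [hTdef]
    linarith
  have hkey : ∀ q i, i + q + 1 ≤ 2 * p → ∀ x : ℝ,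
      bspline t q (n - p + i) (x + T) = bspline t q i x := by
    intro q
    induction q with
    | zero =>
      intro i hi x
      have h1 : t (n - p + i) = t i + T := hT i (by omega)
      have h2 : t (n - p + i + 1) = t (i + 1) + T := by
        have e : n - p + i + 1 = n - p + (i + 1) := by omega
        rw [e]; exact hT (i + 1) (by omega)
      have hiff : (t (n - p + i) ≤ x + T ∧ x + T < t (n - p + i + 1)) ↔
          (t i ≤ x ∧ x < t (i + 1)) := by
        rw [h1, h2]
        constructor <;> rintro ⟨a, b⟩ <;> constructor <;> linarith
      simp only [bspline, hiff]
    | succ q ih =>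
      intro i hi x
      have h1 : t (n - p + i) = t i + T := hT i (by omega)
      have h2 : t (n - p + i + q + 1) = t (i + q + 1) + T := by
        have e : n - p + i + q + 1 = n - p + (i + q + 1) := by omega
        rw [e]; exact hT _ (by omega)
      have h3 : t (n - p + i + q + 2) = t (i + q + 2) + T := by
        have e : n - p + i + q + 2 = n - p + (i + q + 2) := by omega
        rw [e]; exact hT _ (by omega)
      have h4 : t (n - p + i + 1) = t (i + 1) + T := by
        have e : n - p + i + 1 = n - p + (i + 1) := by omega
        rw [e]; exact hT _ (by omega)
      have r1 : bspline t q (n - p + i) (x + T) = bspline t q i x := ih i (by omega) x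
      have r2 : bspline t q (n - p + i + 1) (x + T) = bspline t q (i + 1) x := by
        have e : n - p + i + 1 = n - p + (i + 1) := by omega
        rw [e]; exact ih (i + 1) (by omega) x
      show (x + T - t (n - p + i)) / (t (n - p + i + q + 1) - t (n - p + i)) *
            bspline t q (n - p + i) (x + T) +
          (t (n - p + i + q + 2) - (x + T)) / (t (n - p + i + q + 2) - t (n - p + i + 1)) *
            bspline t q (n - p + i + 1) (x + T) =
          (x - t i) / (t (i + q + 1) - t i) * bspline t q i x +
          (t (i + q + 2) - x) / (t (i + q + 2) - t (i + 1)) * bspline t q (i + 1) x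
      rw [h1, h2, h3, h4, r1, r2]
      have e1 : x + T - (t i + T) = x - t i := by ring
      have e2 : t (i + q + 1) + T - (t i + T) = t (i + q + 1) - t i := by ring
      have e3 : t (i + q + 2) + T - (x + T) = t (i + q + 2) - x := by ring
      have e4 : t (i + q + 2) + T - (t (i + 1) + T) = t (i + q + 2) - t (i + 1) := by ring
      rw [e1, e2, e3, e4]
  intro i hi k hk s
  have hfun : bspline t p i = fun x => bspline t p (n - p + i) (x + T) := by
    funext x
    exact (hkey p i (by omega) x).symm
  rw [hfun, iteratedDeriv_comp_add_const]
end

section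
/- Let p ≥ 1 and n > p, and let t_0 < t_1 < … < t_{n+p} be a strictly increasing knot vector satisfying Δt_i = Δt_{i+n−p} for all i = 0, …, 2p−1, where Δt_i := t_{i+1} − t_i. Let y_0, …, y_{n−1} ∈ ℝ satisfy y_i = y_{n−p+i} for i = 0, …, p−1. Define y(t) := Σ_{i=0}^{n−1} B_i^p(t) y_i. Then for every k = 0, …, p−1 the k-th iterated derivative of y at t_p equals the k-th iterated derivative of y at t_n. -/
/-- Truncated power function `(c - x)_+^q` (with the convention that it is `0` at `x = c`,
which matters only for `q = 0`). -/
noncomputable def tpow (c : ℝ) (q : ℕ) (x : ℝ) : ℝ := if x < c then (c - x) ^ q else 0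

/-- Divided-difference weights for the truncated-power representation of B-splines. -/
noncomputable def bw (t : ℕ → ℝ) (p i j : ℕ) : ℝ :=
  (t (i + p + 1) - t i) / ∏ l ∈ (Finset.range (p + 2)).erase j, (t (i + j) - t (i + l))

lemma tpow_of_ge {c x : ℝ} (q : ℕ) (h : c ≤ x) : tpow c q x = 0 := by
  simp [tpow, not_lt.2 h]

lemma tpow_shift (c T : ℝ) (q : ℕ) (x : ℝ) : tpow (c - T) q x = tpow c q (x + T) := by
  simp only [tpow]
  have h : x < c - T ↔ x + T < c := by constructor <;> intro <;> linarith
  rcases lt_or_ge x (c - T) with h1 | h1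
  · rw [if_pos h1, if_pos (h.1 h1)]; ring_nf
  · rw [if_neg (not_lt.2 h1), if_neg (by rw [not_lt]; linarith)]

lemma mul_tpow_left (a c : ℝ) (q : ℕ) (x : ℝ) :
    (x - a) * tpow c q x = (c - a) * tpow c q x - tpow c (q + 1) x := by
  simp only [tpow]
  rcases lt_or_ge x c with h | h
  · simp only [if_pos h]; ring
  · simp [not_lt.2 h]

lemma mul_tpow_right (b c : ℝ) (q : ℕ) (x : ℝ) :
    (b - x) * tpow c q x = (b - c) * tpow c q x + tpow c (q + 1) x := by
  simp only [tpow]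
  rcases lt_or_ge x c with h | h
  · simp only [if_pos h]; ring
  · simp [not_lt.2 h]

/-- Strict monotonicity on a window. -/
lemma window_mono {t : ℕ → ℝ} {i m : ℕ} (hm : ∀ l, l ≤ m → t (i + l) < t (i + l + 1))
    {a b : ℕ} (hab : a < b) (hb : b ≤ m + 1) : t (i + a) < t (i + b) := by
  induction b with
  | zero => omega
  | succ b ih =>
    rcases Nat.lt_succ_iff_lt_or_eq.1 hab with h | h
    · exact (ih h (by omega)).trans (hm b (by omega))
    · subst h; exact hm a (by omega)


lemma prod_factor_top (t : ℕ → ℝ) (i p j : ℕ) (hj : j < p + 2) :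
    ∏ l ∈ (Finset.range (p + 3)).erase j, (t (i + j) - t (i + l)) =
    (∏ l ∈ (Finset.range (p + 2)).erase j, (t (i + j) - t (i + l))) * (t (i + j) - t (i + p + 2)) := by
  have hset : (Finset.range (p + 3)).erase j = insert (p + 2) ((Finset.range (p + 2)).erase j) := by
    ext a
    simp only [Finset.mem_erase, Finset.mem_range, Finset.mem_insert]
    omega
  rw [hset, Finset.prod_insert (by simp)]
  exact mul_comm _ _

lemma prod_factor_bot (t : ℕ → ℝ) (i p m : ℕ) (hm : m < p + 2) :
    ∏ l ∈ (Finset.range (p + 3)).erase (m + 1), (t (i + m + 1) - t (i + l)) =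
    (∏ l ∈ (Finset.range (p + 2)).erase m, (t (i + m + 1) - t (i + 1 + l))) * (t (i + m + 1) - t i) := by
  have nadd : ∀ a : ℕ, i + 1 + a = i + a + 1 := fun a => by omega
  have himg : ((Finset.range (p + 2)).erase m).image (· + 1) =
      ((Finset.range (p + 3)).erase (m + 1)).erase 0 := by
    ext a
    simp only [Finset.mem_image, Finset.mem_erase, Finset.mem_range]
    constructor
    · rintro ⟨b, ⟨hb1, hb2⟩, rfl⟩; omega
    · rintro ⟨h0, h1, h2⟩; exact ⟨a - 1, by omega, by omega⟩
  have hre : ∏ l ∈ (Finset.range (p + 2)).erase m, (t (i + m + 1) - t (i + 1 + l)) =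
      ∏ l ∈ ((Finset.range (p + 3)).erase (m + 1)).erase 0, (t (i + m + 1) - t (i + l)) := by
    rw [← himg, Finset.prod_image (fun a _ b _ h => by omega)]
    apply Finset.prod_congr rfl
    intro l hl
    congr 2
    omega
  rw [hre]
  have h0mem : (0 : ℕ) ∈ (Finset.range (p + 3)).erase (m + 1) := by
    simp
  rw [← Finset.mul_prod_erase _ _ h0mem]
  simp only [Nat.add_zero]
  exact mul_comm _ _


lemma alg_mid {D1 D2 PP Pu Pv z w a : ℝ} (hPP : PP ≠ 0) (hD1 : D1 ≠ 0) (hD2 : D2 ≠ 0)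
    (h1 : PP = Pu * (z - w)) (h2 : PP = Pv * (z - a)) :
    D1 / Pu * (z - a) / D1 + D2 / Pv * (w - z) / D2 = 0 := by
  have hzw : z - w ≠ 0 := by rw [h1] at hPP; exact (mul_ne_zero_iff.1 hPP).2
  have hza : z - a ≠ 0 := by rw [h2] at hPP; exact (mul_ne_zero_iff.1 hPP).2
  have hu : Pu = PP / (z - w) := (eq_div_iff hzw).2 h1.symm
  have hv : Pv = PP / (z - a) := (eq_div_iff hza).2 h2.symm
  rw [hu, hv]
  field_simp
  ring

lemma alg_mid2 {D1 D2 PP Pu Pv z w a : ℝ} (hPP : PP ≠ 0) (hD1 : D1 ≠ 0) (hD2 : D2 ≠ 0)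
    (h1 : PP = Pu * (z - w)) (h2 : PP = Pv * (z - a)) :
    (w - a) / PP = -(D1 / Pu / D1) + D2 / Pv / D2 := by
  have hzw : z - w ≠ 0 := by rw [h1] at hPP; exact (mul_ne_zero_iff.1 hPP).2
  have hza : z - a ≠ 0 := by rw [h2] at hPP; exact (mul_ne_zero_iff.1 hPP).2
  have hu : Pu = PP / (z - w) := (eq_div_iff hzw).2 h1.symm
  have hv : Pv = PP / (z - a) := (eq_div_iff hza).2 h2.symm
  rw [hu, hv]
  field_simp
  ring

lemma alg_left {D1 PP Pu a w : ℝ} (hPP : PP ≠ 0) (hD1 : D1 ≠ 0) (h1 : PP = Pu * (a - w)) :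
    (w - a) / PP = -(D1 / Pu / D1) := by
  have haw : a - w ≠ 0 := by rw [h1] at hPP; exact (mul_ne_zero_iff.1 hPP).2
  have hu : Pu = PP / (a - w) := (eq_div_iff haw).2 h1.symm
  rw [hu]
  field_simp
  ring

lemma alg_right {D2 PP Pv w a : ℝ} (hPP : PP ≠ 0) (hD2 : D2 ≠ 0) (h2 : PP = Pv * (w - a)) :
    (w - a) / PP = D2 / Pv / D2 := by
  have hwa : w - a ≠ 0 := by rw [h2] at hPP; exact (mul_ne_zero_iff.1 hPP).2
  have hv : Pv = PP / (w - a) := (eq_div_iff hwa).2 h2.symm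
  rw [hv]
  field_simp


section coeffs
variable (t : ℕ → ℝ) (p i : ℕ)

lemma prod_ne_zero' (M N j : ℕ)
    (hlt : ∀ a b : ℕ, a < b → b ≤ M → t (i + a) < t (i + b)) (hj : j ≤ M) (hN : N ≤ M + 1) :
    ∏ l ∈ (Finset.range N).erase j, (t (i + j) - t (i + l)) ≠ 0 := by
  rw [Finset.prod_ne_zero_iff]
  intro l hl
  obtain ⟨hne, hlr⟩ := Finset.mem_erase.1 hl
  rw [Finset.mem_range] at hlr
  rcases lt_or_gt_of_ne hne with h | h
  · exact sub_ne_zero_of_ne (ne_of_gt (hlt l j h hj))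
  · exact sub_ne_zero_of_ne (ne_of_lt (hlt j l h (by omega)))

variable (hm : ∀ l, l ≤ p + 1 → t (i + l) < t (i + l + 1))
include hm

lemma hab_of_hm : ∀ a b : ℕ, a < b → b ≤ p + 2 → t (i + a) < t (i + b) :=
  fun a b h1 h2 => window_mono hm h1 (by omega)

lemma hD1_of_hm : t (i + p + 1) - t i ≠ 0 := by
  have h := hab_of_hm t p i hm 0 (p + 1) (by omega) (by omega)
  have e : t (i + (p + 1)) = t (i + p + 1) := by congr 1
  rw [Nat.add_zero, e] at h
  exact sub_ne_zero_of_ne (ne_of_gt h)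

lemma hD2_of_hm : t (i + p + 2) - t (i + 1) ≠ 0 := by
  have h := hab_of_hm t p i hm 1 (p + 2) (by omega) (by omega)
  have e : t (i + (p + 2)) = t (i + p + 2) := by congr 1
  rw [e] at h
  exact sub_ne_zero_of_ne (ne_of_gt h)

lemma coeff_mid_cancel (j : ℕ) (hj : j ≤ p) :
    bw t p i (j + 1) * (t (i + (j + 1)) - t i) / (t (i + p + 1) - t i) +
    bw t p (i + 1) j * (t (i + p + 2) - t (i + 1 + j)) / (t (i + p + 2) - t (i + 1)) = 0 := by
  have hab := hab_of_hm t p i hm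
  have hPP := prod_ne_zero' t i (p + 2) (p + 3) (j + 1) hab (by omega) (by omega)
  have h1 := prod_factor_top t i p (j + 1) (by omega)
  have h2 := prod_factor_bot t i p j (by omega)
  have a2 : t (i + 1 + j) = t (i + (j + 1)) := by congr 1 <;> omega
  have a3 : t (i + j + 1) = t (i + (j + 1)) := by congr 1 <;> omega
  have a4 : t (i + 1 + p + 1) = t (i + p + 2) := by congr 1 <;> omega
  rw [a3] at h2
  unfold bw
  rw [a2, a4]
  exact alg_mid hPP (hD1_of_hm t p i hm) (hD2_of_hm t p i hm) h1 h2

lemma coeff_mid_W (j : ℕ) (hj : j ≤ p) :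
    bw t (p + 1) i (j + 1) =
      -(bw t p i (j + 1) / (t (i + p + 1) - t i)) +
        bw t p (i + 1) j / (t (i + p + 2) - t (i + 1)) := by
  have hab := hab_of_hm t p i hm
  have hPP := prod_ne_zero' t i (p + 2) (p + 3) (j + 1) hab (by omega) (by omega)
  have h1 := prod_factor_top t i p (j + 1) (by omega)
  have h2 := prod_factor_bot t i p j (by omega)
  have a2 : t (i + 1 + j) = t (i + (j + 1)) := by congr 1 <;> omega
  have a3 : t (i + j + 1) = t (i + (j + 1)) := by congr 1 <;> omega
  have a4 : t (i + 1 + p + 1) = t (i + p + 2) := by congr 1 <;> omega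
  have a5 : t (i + (p + 1) + 1) = t (i + p + 2) := by congr 1 <;> omega
  rw [a3] at h2
  unfold bw
  rw [a2, a4, a5, show (p + 1) + 2 = p + 3 from rfl]
  exact alg_mid2 hPP (hD1_of_hm t p i hm) (hD2_of_hm t p i hm) h1 h2

lemma coeff_left_W :
    bw t (p + 1) i 0 = -(bw t p i 0 / (t (i + p + 1) - t i)) := by
  have hab := hab_of_hm t p i hm
  have hPP := prod_ne_zero' t i (p + 2) (p + 3) 0 hab (by omega) (by omega)
  have h1 := prod_factor_top t i p 0 (by omega)
  have a0 : t (i + 0) = t i := by congr 1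
  have a5 : t (i + (p + 1) + 1) = t (i + p + 2) := by congr 1 <;> omega
  rw [a0] at h1 hPP
  unfold bw
  rw [a0, a5, show (p + 1) + 2 = p + 3 from rfl]
  exact alg_left hPP (hD1_of_hm t p i hm) h1

lemma coeff_right_W :
    bw t (p + 1) i (p + 2) = bw t p (i + 1) (p + 1) / (t (i + p + 2) - t (i + 1)) := by
  have hab := hab_of_hm t p i hm
  have hPP := prod_ne_zero' t i (p + 2) (p + 3) (p + 2) hab (by omega) (by omega)
  have h2 := prod_factor_bot t i p (p + 1) (by omega)
  have a6 : t (i + (p + 1) + 1) = t (i + p + 2) := by congr 1 <;> omega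
  have a7 : t (i + 1 + (p + 1)) = t (i + p + 2) := by congr 1 <;> omega
  have a8 : t (i + (p + 2)) = t (i + p + 2) := by congr 1
  have a9 : t (i + 1 + p + 1) = t (i + p + 2) := by congr 1 <;> omega
  rw [a6, show (p + 1) + 1 = p + 2 from rfl] at h2
  rw [a8] at hPP
  unfold bw
  rw [a6, a7, a8, a9, show (p + 1) + 2 = p + 3 from rfl]
  exact alg_right hPP (hD2_of_hm t p i hm) h2

end coeffs


lemma bspline_rep (t : ℕ → ℝ) (p : ℕ) : ∀ (i : ℕ),
    (∀ l, l ≤ p → t (i + l) < t (i + l + 1)) → ∀ x : ℝ,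
    bspline t p i x = ∑ j ∈ Finset.range (p + 2), bw t p i j * tpow (t (i + j)) p x := by
  induction p with
  | zero =>
    intro i hm x
    have h01 : t i < t (i + 1) := by
      have := hm 0 (by omega); rwa [Nat.add_zero] at this
    have hbw0 : bw t 0 i 0 = -1 := by
      unfold bw
      rw [show (Finset.range 2).erase 0 = {1} from by decide, Finset.prod_singleton]
      simp only [Nat.add_zero]
      rw [div_eq_iff (sub_ne_zero_of_ne (ne_of_lt h01))]
      ring
    have hbw1 : bw t 0 i 1 = 1 := by
      unfold bw
      rw [show (Finset.range 2).erase 1 = {0} from by decide, Finset.prod_singleton]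
      simp only [Nat.add_zero]
      exact div_self (sub_ne_zero_of_ne (ne_of_gt h01))
    rw [Finset.sum_range_succ, Finset.sum_range_succ, Finset.sum_range_zero, hbw0, hbw1]
    simp only [bspline, tpow, pow_zero, Nat.add_zero, zero_add]
    rcases lt_or_ge x (t i) with hxa | hxa
    · have hx1 : x < t (i + 1) := hxa.trans h01
      rw [if_neg (by rintro ⟨h, _⟩; linarith), if_pos hxa, if_pos hx1]; norm_num
    · rcases lt_or_ge x (t (i + 1)) with hxb | hxb
      · rw [if_pos ⟨hxa, hxb⟩, if_neg (not_lt.2 hxa), if_pos hxb]; norm_num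
      · rw [if_neg (by rintro ⟨_, h⟩; linarith), if_neg (not_lt.2 hxa), if_neg (not_lt.2 hxb)]
        norm_num
  | succ p ih =>
    intro i hm x
    have hm' : ∀ l, l ≤ p → t (i + l) < t (i + l + 1) := fun l hl => hm l (by omega)
    have hm'' : ∀ l, l ≤ p → t (i + 1 + l) < t (i + 1 + l + 1) := by
      intro l hl
      have h := hm (l + 1) (by omega)
      have e1 : i + (l + 1) = i + 1 + l := by omega
      rw [e1] at h; exact h
    have IH1 := ih i hm' x
    have IH2 := ih (i + 1) hm'' x
    have hD1 := hD1_of_hm t p i hm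
    have hD2 := hD2_of_hm t p i hm
    have e1 : bspline t (p + 1) i x =
        (x - t i) / (t (i + p + 1) - t i) * bspline t p i x +
        (t (i + p + 2) - x) / (t (i + p + 2) - t (i + 1)) * bspline t p (i + 1) x := rfl
    rw [e1, IH1, IH2, Finset.mul_sum, Finset.mul_sum]
    have hs1 : ∀ j ∈ Finset.range (p + 2),
        (x - t i) / (t (i + p + 1) - t i) * (bw t p i j * tpow (t (i + j)) p x) =
        bw t p i j * (t (i + j) - t i) / (t (i + p + 1) - t i) * tpow (t (i + j)) p x +
          -(bw t p i j) / (t (i + p + 1) - t i) * tpow (t (i + j)) (p + 1) x := by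
      intro j _
      have h := mul_tpow_left (t i) (t (i + j)) p x
      have : (x - t i) / (t (i + p + 1) - t i) * (bw t p i j * tpow (t (i + j)) p x)
          = bw t p i j / (t (i + p + 1) - t i) * ((x - t i) * tpow (t (i + j)) p x) := by ring
      rw [this, h]; ring
    have hs2 : ∀ j ∈ Finset.range (p + 2),
        (t (i + p + 2) - x) / (t (i + p + 2) - t (i + 1)) *
          (bw t p (i + 1) j * tpow (t (i + 1 + j)) p x) =
        bw t p (i + 1) j * (t (i + p + 2) - t (i + 1 + j)) / (t (i + p + 2) - t (i + 1)) *
            tpow (t (i + 1 + j)) p x +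
          bw t p (i + 1) j / (t (i + p + 2) - t (i + 1)) * tpow (t (i + 1 + j)) (p + 1) x := by
      intro j _
      have h := mul_tpow_right (t (i + p + 2)) (t (i + 1 + j)) p x
      have : (t (i + p + 2) - x) / (t (i + p + 2) - t (i + 1)) *
            (bw t p (i + 1) j * tpow (t (i + 1 + j)) p x)
          = bw t p (i + 1) j / (t (i + p + 2) - t (i + 1)) *
              ((t (i + p + 2) - x) * tpow (t (i + 1 + j)) p x) := by ring
      rw [this, h]; ring
    rw [Finset.sum_congr rfl hs1, Finset.sum_congr rfl hs2,
      Finset.sum_add_distrib, Finset.sum_add_distrib]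
    -- Now: (S1 + S2) + (S3 + S4) = RHS
    have hA : (∑ j ∈ Finset.range (p + 2),
          bw t p i j * (t (i + j) - t i) / (t (i + p + 1) - t i) * tpow (t (i + j)) p x) +
        (∑ j ∈ Finset.range (p + 2),
          bw t p (i + 1) j * (t (i + p + 2) - t (i + 1 + j)) / (t (i + p + 2) - t (i + 1)) *
            tpow (t (i + 1 + j)) p x) = 0 := by
      have eg := Finset.sum_range_succ'
        (fun j => bw t p i j * (t (i + j) - t i) / (t (i + p + 1) - t i) * tpow (t (i + j)) p x)
        (p + 1)
      have eh := Finset.sum_range_succ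
        (fun j => bw t p (i + 1) j * (t (i + p + 2) - t (i + 1 + j)) / (t (i + p + 2) - t (i + 1)) *
          tpow (t (i + 1 + j)) p x) (p + 1)
      rw [eg, eh]
      have hg0 : bw t p i 0 * (t (i + 0) - t i) / (t (i + p + 1) - t i) * tpow (t (i + 0)) p x
          = 0 := by
        rw [show t (i + 0) = t i from by rw [Nat.add_zero], sub_self]
        ring
      have hhtop : bw t p (i + 1) (p + 1) * (t (i + p + 2) - t (i + 1 + (p + 1))) /
          (t (i + p + 2) - t (i + 1)) * tpow (t (i + 1 + (p + 1))) p x = 0 := by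
        rw [show t (i + 1 + (p + 1)) = t (i + p + 2) from by congr 1 <;> omega, sub_self]
        ring
      rw [hg0, hhtop, add_zero, add_zero, ← Finset.sum_add_distrib]
      apply Finset.sum_eq_zero
      intro j hj
      have hjp : j ≤ p := by have := Finset.mem_range.1 hj; omega
      have hcc := coeff_mid_cancel t p i hm j hjp
      have ht : t (i + 1 + j) = t (i + (j + 1)) := by congr 1 <;> omega
      have ht2 : t (i + j + 1) = t (i + (j + 1)) := by congr 1 <;> omega
      rw [ht] at hcc
      simp only [ht, ht2]
      linear_combination tpow (t (i + (j + 1))) p x * hcc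
    have hB : (∑ j ∈ Finset.range (p + 2),
          -(bw t p i j) / (t (i + p + 1) - t i) * tpow (t (i + j)) (p + 1) x) +
        (∑ j ∈ Finset.range (p + 2),
          bw t p (i + 1) j / (t (i + p + 2) - t (i + 1)) * tpow (t (i + 1 + j)) (p + 1) x) =
        ∑ j ∈ Finset.range (p + 1 + 2), bw t (p + 1) i j * tpow (t (i + j)) (p + 1) x := by
      have eb2 := Finset.sum_range_succ'
        (fun j => -(bw t p i j) / (t (i + p + 1) - t i) * tpow (t (i + j)) (p + 1) x) (p + 1)
      have eb4 := Finset.sum_range_succ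
        (fun j => bw t p (i + 1) j / (t (i + p + 2) - t (i + 1)) * tpow (t (i + 1 + j)) (p + 1) x)
        (p + 1)
      have ew1 := Finset.sum_range_succ'
        (fun j => bw t (p + 1) i j * tpow (t (i + j)) (p + 1) x) (p + 2)
      have ew2 := Finset.sum_range_succ
        (fun j => bw t (p + 1) i (j + 1) * tpow (t (i + (j + 1))) (p + 1) x) (p + 1)
      rw [eb2, eb4, ew1, ew2]
      have hb0 : -(bw t p i 0) / (t (i + p + 1) - t i) * tpow (t (i + 0)) (p + 1) x =
          bw t (p + 1) i 0 * tpow (t (i + 0)) (p + 1) x := by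
        rw [coeff_left_W t p i hm]
        ring
      have hbtop : bw t p (i + 1) (p + 1) / (t (i + p + 2) - t (i + 1)) *
            tpow (t (i + 1 + (p + 1))) (p + 1) x =
          bw t (p + 1) i (p + 1 + 1) * tpow (t (i + (p + 1 + 1))) (p + 1) x := by
        rw [show t (i + 1 + (p + 1)) = t (i + (p + 1 + 1)) from by congr 1 <;> omega,
          show (p : ℕ) + 1 + 1 = p + 2 from rfl, coeff_right_W t p i hm]
      have hmidB : ∀ j ∈ Finset.range (p + 1),
          -(bw t p i (j + 1)) / (t (i + p + 1) - t i) * tpow (t (i + (j + 1))) (p + 1) x +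
            bw t p (i + 1) j / (t (i + p + 2) - t (i + 1)) * tpow (t (i + 1 + j)) (p + 1) x =
          bw t (p + 1) i (j + 1) * tpow (t (i + (j + 1))) (p + 1) x := by
        intro j hj
        have hjp : j ≤ p := by have := Finset.mem_range.1 hj; omega
        have ht : t (i + 1 + j) = t (i + (j + 1)) := by congr 1 <;> omega
        rw [ht, coeff_mid_W t p i hm j hjp]
        ring
      calc (∑ j ∈ Finset.range (p + 1),
            -(bw t p i (j + 1)) / (t (i + p + 1) - t i) * tpow (t (i + (j + 1))) (p + 1) x) +
            -(bw t p i 0) / (t (i + p + 1) - t i) * tpow (t (i + 0)) (p + 1) x +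
          ((∑ j ∈ Finset.range (p + 1),
            bw t p (i + 1) j / (t (i + p + 2) - t (i + 1)) * tpow (t (i + 1 + j)) (p + 1) x) +
            bw t p (i + 1) (p + 1) / (t (i + p + 2) - t (i + 1)) *
              tpow (t (i + 1 + (p + 1))) (p + 1) x)
          = ((∑ j ∈ Finset.range (p + 1),
              (-(bw t p i (j + 1)) / (t (i + p + 1) - t i) * tpow (t (i + (j + 1))) (p + 1) x +
               bw t p (i + 1) j / (t (i + p + 2) - t (i + 1)) * tpow (t (i + 1 + j)) (p + 1) x)) +
              bw t p (i + 1) (p + 1) / (t (i + p + 2) - t (i + 1)) *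
                tpow (t (i + 1 + (p + 1))) (p + 1) x) +
            -(bw t p i 0) / (t (i + p + 1) - t i) * tpow (t (i + 0)) (p + 1) x := by
            rw [Finset.sum_add_distrib]; ring
        _ = ((∑ j ∈ Finset.range (p + 1),
              bw t (p + 1) i (j + 1) * tpow (t (i + (j + 1))) (p + 1) x) +
              bw t (p + 1) i (p + 1 + 1) * tpow (t (i + (p + 1 + 1))) (p + 1) x) +
            bw t (p + 1) i 0 * tpow (t (i + 0)) (p + 1) x := by
            rw [Finset.sum_congr rfl hmidB, hb0, hbtop]
    linarith [hA, hB]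

lemma bspline_zero_of_lt (t : ℕ → ℝ) (p i : ℕ) (hm : ∀ l, l ≤ p → t (i + l) < t (i + l + 1))
    {x : ℝ} (hx : x < t i) : bspline t p i x = 0 := by
  induction p generalizing i with
  | zero => simp [bspline, not_le.2 hx]
  | succ p ih =>
    have h1 : bspline t p i x = 0 := ih i (fun l hl => hm l (by omega)) hx
    have h2 : bspline t p (i + 1) x = 0 := by
      refine ih (i + 1) (fun l hl => ?_) (lt_trans hx ?_)
      · have := hm (l + 1) (by omega); simpa [Nat.add_assoc, Nat.add_comm 1 l] using this
      · simpa using hm 0 (by omega)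
    simp [bspline, h1, h2]

lemma bspline_zero_of_ge (t : ℕ → ℝ) (p i : ℕ) (hm : ∀ l, l ≤ p → t (i + l) < t (i + l + 1))
    {x : ℝ} (hx : t (i + p + 1) ≤ x) : bspline t p i x = 0 := by
  induction p generalizing i with
  | zero => simp [bspline]; intro h; linarith [hx]
  | succ p ih =>
    have h1 : bspline t p i x = 0 := by
      refine ih i (fun l hl => hm l (by omega)) (le_trans ?_ hx)
      have h := hm (p + 1) (by omega)
      have e1 : i + (p + 1) = i + p + 1 := by omega
      have e2 : i + (p + 1) + 1 = i + p + 1 + 1 := by omega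
      rw [e2]
      exact le_of_lt h
    have h2 : bspline t p (i + 1) x = 0 := by
      refine ih (i + 1) (fun l hl => ?_) ?_
      · have := hm (l + 1) (by omega); simpa [Nat.add_assoc, Nat.add_comm 1 l] using this
      · have e : i + 1 + p + 1 = i + (p + 1) + 1 := by omega
        rw [e]; exact hx
    simp [bspline, h1, h2]

/-- The weights annihilate plain powers of degree at most `p`. -/
lemma bw_annihilate (t : ℕ → ℝ) (p i : ℕ) (hm : ∀ l, l ≤ p → t (i + l) < t (i + l + 1))
    (q : ℕ) (hq : q ≤ p) (x : ℝ) :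
    ∑ j ∈ Finset.range (p + 2), bw t p i j * (t (i + j) - x) ^ q = 0 := by
  open Polynomial in
  have key : ∀ d ≤ p, (∑ j ∈ Finset.range (p + 2),
      Polynomial.C (bw t p i j) * (Polynomial.C (t (i + j)) - Polynomial.X) ^ (p - d))
        = (0 : Polynomial ℝ) := by
    intro d hd
    induction d with
    | zero =>
      apply Polynomial.eq_zero_of_infinite_isRoot
      apply Set.Infinite.mono (s := Set.Iio (t i))
      swap
      · exact Set.Iio_infinite (t i)
      intro z (hz : z < t i)
      have heval : Polynomial.eval z (∑ j ∈ Finset.range (p + 2),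
          Polynomial.C (bw t p i j) * (Polynomial.C (t (i + j)) - Polynomial.X) ^ (p - 0)) =
          ∑ j ∈ Finset.range (p + 2), bw t p i j * (t (i + j) - z) ^ p := by
        simp [Polynomial.eval_finset_sum]
      have hrep := bspline_rep t p i hm z
      have hzero := bspline_zero_of_lt t p i hm hz
      have htp : ∀ j ∈ Finset.range (p + 2), bw t p i j * tpow (t (i + j)) p z
          = bw t p i j * (t (i + j) - z) ^ p := by
        intro j hj
        have hle : t i ≤ t (i + j) := by
          rcases Nat.eq_zero_or_pos j with h0 | h0
          · subst h0; simp
          · have := window_mono (m := p) hm h0 (by have := Finset.mem_range.1 hj; omega)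
            simpa using le_of_lt this
        have : z < t (i + j) := lt_of_lt_of_le hz hle
        simp [tpow, this]
      simp only [Set.mem_setOf_eq, Polynomial.IsRoot.def, heval]
      rw [← Finset.sum_congr rfl htp, ← hrep, hzero]
    | succ d ih =>
      have hzero := ih (by omega)
      have hder := congrArg Polynomial.derivative hzero
      rw [Polynomial.derivative_sum, Polynomial.derivative_zero] at hder
      have hstep : ∀ j ∈ Finset.range (p + 2),
          Polynomial.derivative (Polynomial.C (bw t p i j) *
            (Polynomial.C (t (i + j)) - Polynomial.X) ^ (p - d)) =
          Polynomial.C (-((p - d : ℕ) : ℝ)) *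
            (Polynomial.C (bw t p i j) * (Polynomial.C (t (i + j)) - Polynomial.X) ^ (p - (d+1))) := by
        intro j hj
        rw [Polynomial.derivative_C_mul, Polynomial.derivative_pow]
        have : Polynomial.derivative (Polynomial.C (t (i + j)) - Polynomial.X)
            = (-1 : Polynomial ℝ) := by
          simp
        rw [this]
        have e : p - d - 1 = p - (d + 1) := by omega
        rw [e, map_neg]
        ring
      rw [Finset.sum_congr rfl hstep, ← Finset.mul_sum] at hder
      rcases mul_eq_zero.1 hder with hc | hs
      · exfalso
        have : ((p - d : ℕ) : ℝ) ≠ 0 := by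
          have : 0 < p - d := by omega
          positivity
        rw [Polynomial.C_eq_zero] at hc
        simp at hc
        exact this (by exact_mod_cast hc)
      · exact hs
  have h := key (p - q) (by omega)
  have e : p - (p - q) = q := by omega
  rw [e] at h
  have := congrArg (Polynomial.eval x) h
  simpa [Polynomial.eval_finset_sum] using this

lemma tpow_hasDerivAt (c : ℝ) (q : ℕ) (hq : 2 ≤ q) (x : ℝ) :
    HasDerivAt (tpow c q) (-(q : ℝ) * tpow c (q - 1) x) x := by
  rcases lt_trichotomy x c with h | h | h
  · have hev : (fun y => (c - y) ^ q) =ᶠ[nhds x] tpow c q := by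
      filter_upwards [Iio_mem_nhds h] with y (hy : y < c)
      simp [tpow, hy]
    have hd : HasDerivAt (fun y => (c - y) ^ q) ((q : ℝ) * (c - x) ^ (q - 1) * (-1)) x :=
      (((hasDerivAt_id x).const_sub c).pow q)
    have h2 := hd.congr_of_eventuallyEq hev.symm
    refine h2.congr_deriv ?_
    simp only [tpow, if_pos h]; ring
  · subst h
    rw [hasDerivAt_iff_tendsto_slope]
    have hz : tpow x (q - 1) x = 0 := by simp [tpow]
    rw [hz, mul_zero]
    have hb : ∀ y ∈ ({x}ᶜ : Set ℝ), ‖slope (tpow x q) x y‖ ≤ |y - x| ^ (q - 1) := by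
      intro y hyx
      rw [slope_def_field]
      simp only [tpow, lt_irrefl, if_false]
      rcases lt_or_ge y x with h1 | h1
      · rw [if_pos h1, sub_zero, div_eq_mul_inv]
        rw [norm_mul, norm_inv, norm_pow]
        have e2 : ‖y - x‖ = |y - x| := rfl
        have e3 : ‖x - y‖ = |y - x| := by rw [Real.norm_eq_abs, abs_sub_comm]
        rw [e2, e3]
        have hne : |y - x| ≠ 0 := by simp [sub_eq_zero]; exact hyx
        rw [← pow_sub_one_mul (by omega : q ≠ 0) |y - x|,
          mul_inv_cancel_right₀ hne]
      · rw [if_neg (not_lt.2 h1), sub_zero, zero_div, norm_zero]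
        positivity
    have hbnd : Filter.Tendsto (fun y => |y - x| ^ (q - 1)) (nhdsWithin x {x}ᶜ) (nhds 0) := by
      have h3 : Filter.Tendsto (fun y : ℝ => |y - x| ^ (q - 1)) (nhds x) (nhds (|x - x| ^ (q - 1))) :=
        (((continuous_id.sub continuous_const).abs).pow (q-1)).continuousAt
      simp only [sub_self, abs_zero, zero_pow (by omega : q - 1 ≠ 0)] at h3
      exact h3.mono_left nhdsWithin_le_nhds
    exact squeeze_zero_norm' (Filter.eventually_of_mem self_mem_nhdsWithin hb) hbnd
  · have hev : (fun _ : ℝ => (0:ℝ)) =ᶠ[nhds x] tpow c q := by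
      filter_upwards [Ioi_mem_nhds h] with y (hy : c < y)
      simp [tpow, not_lt.2 (le_of_lt hy)]
    have hd : HasDerivAt (fun _ : ℝ => (0:ℝ)) 0 x := hasDerivAt_const x 0
    have h2 := hd.congr_of_eventuallyEq hev.symm
    refine h2.congr_deriv ?_
    simp [tpow, not_lt.2 (le_of_lt h)]

/-- Iterated derivatives of a finite combination of truncated powers. -/
lemma rep_iteratedDeriv {ι : Type*} (S : Finset ι) (c τ : ι → ℝ) (p k : ℕ) (hk : k < p) :
    iteratedDeriv k (fun x => ∑ j ∈ S, c j * tpow (τ j) p x) =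
      fun x => ∑ j ∈ S, c j * ((-1 : ℝ) ^ k * (p.descFactorial k : ℝ) * tpow (τ j) (p - k) x) := by
  induction k with
  | zero =>
    simp only [iteratedDeriv_zero, pow_zero, Nat.descFactorial_zero, Nat.cast_one, one_mul,
      Nat.sub_zero]
  | succ k ih =>
    rw [iteratedDeriv_succ, ih (by omega)]
    funext x
    have hder : HasDerivAt
        (fun x => ∑ j ∈ S, c j * ((-1 : ℝ) ^ k * (p.descFactorial k : ℝ) * tpow (τ j) (p - k) x))
        (∑ j ∈ S, c j * ((-1 : ℝ) ^ k * (p.descFactorial k : ℝ) *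
          (-((p - k : ℕ) : ℝ) * tpow (τ j) (p - k - 1) x))) x := by
      apply HasDerivAt.fun_sum
      intro j hj
      have h2 : 2 ≤ p - k := by omega
      have := (tpow_hasDerivAt (τ j) (p - k) h2 x).const_mul
        (c j * ((-1 : ℝ) ^ k * (p.descFactorial k : ℝ)))
      exact (this.congr_deriv (by ring)).congr_of_eventuallyEq
        (Filter.Eventually.of_forall fun y => by beta_reduce; ring)
    rw [hder.deriv]
    apply Finset.sum_congr rfl
    intro j hj
    have e1 : p - k - 1 = p - (k + 1) := by omega
    rw [e1]
    have e2 : (p.descFactorial (k + 1) : ℝ) = ((p - k : ℕ) : ℝ) * (p.descFactorial k : ℝ) := by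
      rw [Nat.descFactorial_succ]; push_cast; ring
    rw [e2, pow_succ]
    ring

/-- B-splines are translation invariant. -/
lemma bspline_shift (t : ℕ → ℝ) (T : ℝ) (p i i' : ℕ)
    (h : ∀ l, l ≤ p + 1 → t (i' + l) = t (i + l) + T) (x : ℝ) :
    bspline t p i' (x + T) = bspline t p i x := by
  induction p generalizing i i' with
  | zero =>
    have h0 := h 0 (by omega); have h1 := h 1 (by omega)
    simp only [Nat.add_zero] at h0
    simp only [bspline]
    rw [h0, h1]
    congr 1
    · rw [eq_iff_iff]
      constructor <;> rintro ⟨a, b⟩ <;> constructor <;> linarith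
  | succ p ih =>
    have h0 := h 0 (by omega)
    simp only [Nat.add_zero] at h0
    have hp1 := h (p + 1) (by omega)
    have hp2 := h (p + 2) (by omega)
    have h1 := h 1 (by omega)
    have e1 : ∀ m : ℕ, m + (p + 1) = m + p + 1 := fun m => by omega
    have e2 : ∀ m : ℕ, m + (p + 2) = m + p + 2 := fun m => by omega
    rw [e1, e1] at hp1
    rw [e2, e2] at hp2
    simp only [bspline]
    rw [ih i i' (fun l hl => h l (by omega)),
      ih (i + 1) (i' + 1) (fun l hl => by
        have := h (l + 1) (by omega)
        have ea : ∀ m : ℕ, m + 1 + l = m + (l + 1) := fun m => by omega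
        rw [ea, ea]; exact this)]
    rw [h0, hp1, hp2, h1]
    ring

/-- Lemma 3 of the paper: the `y`-coordinate of a periodic B-spline curve. -/
theorem bspline_curve_y_coordinate (p n : ℕ) (hp : 1 ≤ p) (hn : p < n)
    (t : ℕ → ℝ) (hmono : ∀ i < n + p, t i < t (i + 1))
    (hequi : ∀ i < 2 * p, t (i + 1) - t i = t (i + (n - p) + 1) - t (i + (n - p)))
    (y : ℕ → ℝ) (hy : ∀ i < p, y i = y (n - p + i))
    (Y : ℝ → ℝ) (hY : Y = fun s => ∑ i ∈ Finset.range n, bspline t p i s * y i) :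
    ∀ k < p, iteratedDeriv k Y (t p) = iteratedDeriv k Y (t n) := by
  intro k hk
  set T : ℝ := t n - t p with hT
  -- global monotonicity
  have hstrict : ∀ a b : ℕ, a < b → b ≤ n + p → t a < t b := by
    intro a b hab hb
    induction b with
    | zero => omega
    | succ b ih =>
      rcases Nat.lt_succ_iff_lt_or_eq.1 hab with h | h
      · exact (ih h (by omega)).trans (hmono b (by omega))
      · subst h; exact hmono a (by omega)
  have hle : ∀ a b : ℕ, a ≤ b → b ≤ n + p → t a ≤ t b := by
    intro a b hab hb
    rcases Nat.lt_or_ge a b with h | h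
    · exact le_of_lt (hstrict a b h hb)
    · have : a = b := by omega
      rw [this]
  -- the shift identity for knots
  have hd0 : ∀ j ≤ 2 * p, t (j + (n - p)) - t j = t (n - p) - t 0 := by
    intro j hj
    induction j with
    | zero => rw [Nat.zero_add]
    | succ j ih =>
      have hih := ih (by omega)
      have he := hequi j (by omega)
      have e1 : j + 1 + (n - p) = j + (n - p) + 1 := by omega
      rw [e1]
      linarith [he, hih]
  have hTd : t (n - p) - t 0 = T := by
    have h := hd0 p (by omega)
    rw [show p + (n - p) = n from by omega] at h
    rw [← h, hT]
  have hshift : ∀ j, j ≤ 2 * p → t (j + (n - p)) = t j + T := by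
    intro j hj
    have := hd0 j hj
    rw [hTd] at this
    linarith
  -- windows are monotone
  have hwin : ∀ i, i + p + 1 ≤ n + p → ∀ l, l ≤ p → t (i + l) < t (i + l + 1) := by
    intro i hi l hl
    exact hmono (i + l) (by omega)
  -- B-spline shift
  have hbsh : ∀ i, i < p → ∀ x : ℝ, bspline t p (i + (n - p)) (x + T) = bspline t p i x := by
    intro i hi x
    apply bspline_shift
    intro l hl
    have h := hshift (i + l) (by omega)
    rw [show i + l + (n - p) = i + (n - p) + l from by omega] at h
    exact h
  -- splitting of Y
  have hsplit1 : ∀ x : ℝ, Y (x + T) =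
      (∑ i ∈ Finset.range (n - p), bspline t p i (x + T) * y i) +
        ∑ i ∈ Finset.range p, bspline t p i x * y i := by
    intro x
    rw [hY]
    show (∑ i ∈ Finset.range n, bspline t p i (x + T) * y i) = _
    have hsum := Finset.sum_range_add_sum_Ico
      (fun i => bspline t p i (x + T) * y i) (show n - p ≤ n from by omega)
    rw [← hsum]
    congr 1
    rw [Finset.sum_Ico_eq_sum_range]
    rw [show n - (n - p) = p from by omega]
    apply Finset.sum_congr rfl
    intro i hi
    have hip : i < p := Finset.mem_range.1 hi
    have e1 : n - p + i = i + (n - p) := by omega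
    rw [e1, hbsh i hip x, ← e1, ← hy i hip]
  have hsplit2 : ∀ x : ℝ, Y x =
      (∑ i ∈ Finset.range p, bspline t p i x * y i) +
        ∑ i ∈ Finset.range (n - p), bspline t p (p + i) x * y (p + i) := by
    intro x
    rw [hY]
    show (∑ i ∈ Finset.range n, bspline t p i x * y i) = _
    have hsum := Finset.sum_range_add_sum_Ico
      (fun i => bspline t p i x * y i) (show p ≤ n from by omega)
    rw [← hsum]
    congr 1
    rw [Finset.sum_Ico_eq_sum_range]
  -- the global representation of Y
  have hYrep : ∀ x : ℝ, Y x = ∑ ij ∈ Finset.range n ×ˢ Finset.range (p + 2),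
      (bw t p ij.1 ij.2 * y ij.1) * tpow (t (ij.1 + ij.2)) p x := by
    intro x
    rw [hY]
    show (∑ i ∈ Finset.range n, bspline t p i x * y i) = _
    rw [Finset.sum_product]
    apply Finset.sum_congr rfl
    intro i hi
    have hin : i < n := Finset.mem_range.1 hi
    rw [bspline_rep t p i (hwin i (by omega)) x, Finset.sum_mul]
    apply Finset.sum_congr rfl
    intro j hj
    ring
  -- shifted representation
  have hYshrep : ∀ x : ℝ, Y (x + T) = ∑ ij ∈ Finset.range n ×ˢ Finset.range (p + 2),
      (bw t p ij.1 ij.2 * y ij.1) * tpow (t (ij.1 + ij.2) - T) p x := by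
    intro x
    rw [hYrep (x + T)]
    exact Finset.sum_congr rfl (fun ij _ => by rw [tpow_shift])
  -- G agrees with H near t p
  have hU : Set.Ioo (t (p - 1)) (t (p + 1)) ∈ nhds (t p) :=
    Ioo_mem_nhds (hstrict (p - 1) p (by omega) (by omega)) (hstrict p (p + 1) (by omega) (by omega))
  have hGH : (fun x : ℝ => Y (x + T) - Y x) =ᶠ[nhds (t p)]
      (fun x : ℝ => bspline t p (n - p - 1) (x + T) * y (n - p - 1) - bspline t p p x * y p) := by
    apply Filter.eventuallyEq_of_mem hU
    intro x hx
    obtain ⟨hx1, hx2⟩ := hx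
    have hsum1 : (∑ i ∈ Finset.range (n - p), bspline t p i (x + T) * y i) =
        bspline t p (n - p - 1) (x + T) * y (n - p - 1) := by
      apply Finset.sum_eq_single_of_mem (n - p - 1) (Finset.mem_range.2 (by omega))
      intro i hi hne
      have hilt : i < n - p := Finset.mem_range.1 hi
      have hz : bspline t p i (x + T) = 0 := by
        apply bspline_zero_of_ge t p i (hwin i (by omega))
        have h1 : t (i + p + 1) ≤ t (n - 1) := hle (i + p + 1) (n - 1) (by omega) (by omega)
        have h2 : t (n - 1) = t (p - 1) + T := by
          have h3 := hshift (p - 1) (by omega)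
          rw [show p - 1 + (n - p) = n - 1 from by omega] at h3
          exact h3
        linarith
      rw [hz, zero_mul]
    have hsum2 : (∑ i ∈ Finset.range (n - p), bspline t p (p + i) x * y (p + i)) =
        bspline t p p x * y p := by
      have h0 : (0 : ℕ) ∈ Finset.range (n - p) := Finset.mem_range.2 (by omega)
      rw [Finset.sum_eq_single_of_mem 0 h0]
      · rw [Nat.add_zero]
      · intro i hi hne
        have hilt : i < n - p := Finset.mem_range.1 hi
        have hz : bspline t p (p + i) x = 0 := by
          apply bspline_zero_of_lt t p (p + i) (hwin (p + i) (by omega))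
          have h1 : t (p + 1) ≤ t (p + i) := hle (p + 1) (p + i) (by omega) (by omega)
          linarith
        rw [hz, zero_mul]
    show Y (x + T) - Y x = _
    rw [hsplit1 x, hsplit2 x, hsum1, hsum2]
    ring
  have hiGH : iteratedDeriv k (fun x : ℝ => Y (x + T) - Y x) (t p) =
      iteratedDeriv k (fun x : ℝ =>
        bspline t p (n - p - 1) (x + T) * y (n - p - 1) - bspline t p p x * y p) (t p) :=
    hGH.iteratedDeriv_eq k
  -- representation of G as a single combination
  have hGfun : (fun x : ℝ => Y (x + T) - Y x) = fun x =>
      ∑ e ∈ (Finset.range n ×ˢ Finset.range (p + 2)).disjSum (Finset.range n ×ˢ Finset.range (p + 2)),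
        (Sum.elim (fun ij : ℕ × ℕ => bw t p ij.1 ij.2 * y ij.1) (fun ij : ℕ × ℕ => -(bw t p ij.1 ij.2 * y ij.1)) e) *
          tpow (Sum.elim (fun ij : ℕ × ℕ => t (ij.1 + ij.2) - T) (fun ij : ℕ × ℕ => t (ij.1 + ij.2)) e) p x := by
    funext x
    show Y (x + T) - Y x = _
    rw [Finset.sum_disjSum]
    simp only [Sum.elim_inl, Sum.elim_inr]
    rw [hYshrep x, hYrep x, sub_eq_add_neg, ← Finset.sum_neg_distrib]
    congr 1
    exact Finset.sum_congr rfl (fun ij _ => by ring)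
  -- representation of H as a single combination
  have hHfun : (fun x : ℝ =>
      bspline t p (n - p - 1) (x + T) * y (n - p - 1) - bspline t p p x * y p) = fun x =>
      ∑ e ∈ (Finset.range (p + 2)).disjSum (Finset.range (p + 2)),
        (Sum.elim (fun j => bw t p (n - p - 1) j * y (n - p - 1))
          (fun j => -(bw t p p j * y p)) e) *
          tpow (Sum.elim (fun j => t (n - p - 1 + j) - T) (fun j => t (p + j)) e) p x := by
    funext x
    show bspline t p (n - p - 1) (x + T) * y (n - p - 1) - bspline t p p x * y p = _
    rw [Finset.sum_disjSum]
    simp only [Sum.elim_inl, Sum.elim_inr]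
    rw [bspline_rep t p (n - p - 1) (hwin (n - p - 1) (by omega)) (x + T),
      bspline_rep t p p (hwin p (by omega)) x, Finset.sum_mul, Finset.sum_mul,
      sub_eq_add_neg, ← Finset.sum_neg_distrib]
    congr 1
    · exact Finset.sum_congr rfl (fun j _ => by rw [← tpow_shift]; ring)
    · exact Finset.sum_congr rfl (fun j _ => by ring)
  -- iterated derivatives via the representations
  have hGval : iteratedDeriv k (fun x : ℝ => Y (x + T) - Y x) (t p) =
      (∑ ij ∈ Finset.range n ×ˢ Finset.range (p + 2), (bw t p ij.1 ij.2 * y ij.1) * ((-1 : ℝ) ^ k * (p.descFactorial k : ℝ) * tpow (t (ij.1 + ij.2) - T) (p - k) (t p))) +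
      ∑ ij ∈ Finset.range n ×ˢ Finset.range (p + 2), (-(bw t p ij.1 ij.2 * y ij.1)) * ((-1 : ℝ) ^ k * (p.descFactorial k : ℝ) * tpow (t (ij.1 + ij.2)) (p - k) (t p)) := by
    rw [hGfun, rep_iteratedDeriv _ _ _ p k hk]
    show (∑ e ∈ (Finset.range n ×ˢ Finset.range (p + 2)).disjSum (Finset.range n ×ˢ Finset.range (p + 2)), _) = _
    rw [Finset.sum_disjSum]
    simp only [Sum.elim_inl, Sum.elim_inr]
  have hHval : iteratedDeriv k (fun x : ℝ =>
      bspline t p (n - p - 1) (x + T) * y (n - p - 1) - bspline t p p x * y p) (t p) =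
      (∑ j ∈ Finset.range (p + 2), (bw t p (n - p - 1) j * y (n - p - 1)) *
        ((-1 : ℝ) ^ k * (p.descFactorial k : ℝ) * tpow (t (n - p - 1 + j) - T) (p - k) (t p))) +
      ∑ j ∈ Finset.range (p + 2), (-(bw t p p j * y p)) * ((-1 : ℝ) ^ k * (p.descFactorial k : ℝ) * tpow (t (p + j)) (p - k) (t p)) := by
    rw [hHfun, rep_iteratedDeriv _ _ _ p k hk]
    show (∑ e ∈ (Finset.range (p + 2)).disjSum (Finset.range (p + 2)), _) = _
    rw [Finset.sum_disjSum]
    simp only [Sum.elim_inl, Sum.elim_inr]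
  -- evaluate the derivative of Y itself at t p and t n
  have hYfun : Y = fun x => ∑ ij ∈ Finset.range n ×ˢ Finset.range (p + 2), (bw t p ij.1 ij.2 * y ij.1) * tpow (t (ij.1 + ij.2)) p x := funext hYrep
  have hYn : iteratedDeriv k Y (t n) =
      ∑ ij ∈ Finset.range n ×ˢ Finset.range (p + 2), (bw t p ij.1 ij.2 * y ij.1) * ((-1 : ℝ) ^ k * (p.descFactorial k : ℝ) * tpow (t (ij.1 + ij.2)) (p - k) (t n)) := by
    rw [hYfun, rep_iteratedDeriv _ _ _ p k hk]
  have hYp : iteratedDeriv k Y (t p) =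
      ∑ ij ∈ Finset.range n ×ˢ Finset.range (p + 2), (bw t p ij.1 ij.2 * y ij.1) * ((-1 : ℝ) ^ k * (p.descFactorial k : ℝ) * tpow (t (ij.1 + ij.2)) (p - k) (t p)) := by
    rw [hYfun, rep_iteratedDeriv _ _ _ p k hk]
  have htpT : t p + T = t n := by rw [hT]; ring
  -- identify the two halves of G's derivative
  have hG1 : (∑ ij ∈ Finset.range n ×ˢ Finset.range (p + 2), (bw t p ij.1 ij.2 * y ij.1) * ((-1 : ℝ) ^ k * (p.descFactorial k : ℝ) * tpow (t (ij.1 + ij.2) - T) (p - k) (t p))) =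
      iteratedDeriv k Y (t n) := by
    rw [hYn]
    exact Finset.sum_congr rfl (fun ij _ => by rw [tpow_shift, htpT])
  have hG2 : (∑ ij ∈ Finset.range n ×ˢ Finset.range (p + 2), (-(bw t p ij.1 ij.2 * y ij.1)) * ((-1 : ℝ) ^ k * (p.descFactorial k : ℝ) * tpow (t (ij.1 + ij.2)) (p - k) (t p))) =
      -iteratedDeriv k Y (t p) := by
    rw [hYp, ← Finset.sum_neg_distrib]
    exact Finset.sum_congr rfl (fun ij _ => by ring)
  -- the two halves of H's derivative vanish
  have hH1 : (∑ j ∈ Finset.range (p + 2), (bw t p (n - p - 1) j * y (n - p - 1)) *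
      ((-1 : ℝ) ^ k * (p.descFactorial k : ℝ) * tpow (t (n - p - 1 + j) - T) (p - k) (t p))) = 0 := by
    apply Finset.sum_eq_zero
    intro j hj
    have hjr : j < p + 2 := Finset.mem_range.1 hj
    have hz : tpow (t (n - p - 1 + j) - T) (p - k) (t p) = 0 := by
      rw [tpow_shift, htpT]
      exact tpow_of_ge _ (hle (n - p - 1 + j) n (by omega) (by omega))
    rw [hz]
    ring
  have hH2 : (∑ j ∈ Finset.range (p + 2), (-(bw t p p j * y p)) * ((-1 : ℝ) ^ k * (p.descFactorial k : ℝ) * tpow (t (p + j)) (p - k) (t p))) = 0 := by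
    have hterm : ∀ j ∈ Finset.range (p + 2), (-(bw t p p j * y p)) * ((-1 : ℝ) ^ k * (p.descFactorial k : ℝ) * tpow (t (p + j)) (p - k) (t p)) =
        (-(y p) * ((-1 : ℝ) ^ k * (p.descFactorial k : ℝ))) * (bw t p p j * (t (p + j) - t p) ^ (p - k)) := by
      intro j hj
      have hjr : j < p + 2 := Finset.mem_range.1 hj
      rcases Nat.eq_zero_or_pos j with h0 | h0
      · subst h0
        have e0 : t (p + 0) = t p := by rw [Nat.add_zero]
        rw [e0, tpow_of_ge _ (le_refl (t p)), sub_self, zero_pow (by omega : p - k ≠ 0)]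
        ring
      · have hlt2 : t p < t (p + j) := hstrict p (p + j) (by omega) (by omega)
        rw [tpow, if_pos hlt2]
        ring
    rw [Finset.sum_congr rfl hterm, ← Finset.mul_sum,
      bw_annihilate t p p (hwin p (by omega)) (p - k) (by omega) (t p), mul_zero]
  -- put everything together
  rw [hGval, hHval, hG1, hG2, hH1, hH2] at hiGH
  linarith [hiGH]
end

section
/- Let p ≥ 1, n > p, and L ∈ ℝ. Take the uniform knots t_i := i/(n+p) for i = 0, …, n+p, and define control points (x_i, y_i) ∈ ℝ², i = 0, …, n−1, by x_i := x_0 + i·H with x_0 := −L/2 − L(p−1)/(2(n−p)) and H := L/(n−p), and with y_i satisfying y_i = y_{n−p+i} for i = 0, …, p−1. Define the plane B-spline curve (x(t), y(t)) := Σ_{i=0}^{n−1} B_i^p(t) (x_i, y_i). Then x(t_p) = −L/2, x(t_n) = L/2, and for every k = 0, …, p−1 the k-th iterated derivative of y at t_p equals the k-th iterated derivative of y at t_n. -/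
open Finset Filter Set Topology

/-- The cardinal B-spline of degree `p` with knots `0, 1, …, p+1`. -/
noncomputable def cardN : ℕ → ℝ → ℝ
  | 0, x => if 0 ≤ x ∧ x < 1 then 1 else 0
  | p + 1, x => x / (p + 1) * cardN p x + ((p + 2 - x) / (p + 1)) * cardN p (x - 1)

lemma cardN_succ (p : ℕ) (x : ℝ) :
    cardN (p + 1) x = x / ((p : ℝ) + 1) * cardN p x
      + (((p : ℝ) + 2 - x) / ((p : ℝ) + 1)) * cardN p (x - 1) := rfl

lemma cardN_zero_of_neg : ∀ (p : ℕ) {x : ℝ}, x < 0 → cardN p x = 0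
  | 0, x, hx => by simp [cardN]; intro h; linarith
  | p + 1, x, hx => by
      rw [cardN_succ, cardN_zero_of_neg p hx, cardN_zero_of_neg p (by linarith : x - 1 < 0)]
      ring

lemma cardN_zero_of_ge : ∀ (p : ℕ) {x : ℝ}, ((p : ℝ) + 1) ≤ x → cardN p x = 0
  | 0, x, hx => by simp only [Nat.cast_zero, zero_add] at hx; simp [cardN]; intro h; linarith
  | p + 1, x, hx => by
      push_cast at hx
      rw [cardN_succ, cardN_zero_of_ge p (by linarith), cardN_zero_of_ge p (by push_cast; linarith)]
      ring

lemma cardN_zero_of_nonpos : ∀ (p : ℕ), 1 ≤ p → ∀ {x : ℝ}, x ≤ 0 → cardN p x = 0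
  | p + 1, _, x, hx => by
      rw [cardN_succ, cardN_zero_of_neg p (by linarith : x - 1 < 0)]
      rcases lt_or_eq_of_le hx with h | h
      · rw [cardN_zero_of_neg p h]; ring
      · rw [h]; ring

lemma cardN_one (x : ℝ) : cardN 1 x = max 0 (1 - |x - 1|) := by
  rw [show (1 : ℕ) = 0 + 1 from rfl, cardN_succ]
  simp only [cardN, Nat.cast_zero, zero_add]
  rcases lt_or_ge x 0 with h0 | h0
  · rw [if_neg (by intro h; linarith), if_neg (by intro h; linarith)]
    rw [abs_of_nonpos (by linarith), max_eq_left (by linarith)]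
    ring
  rcases lt_or_ge x 1 with h1 | h1
  · rw [if_pos ⟨h0, h1⟩, if_neg (by intro h; linarith)]
    rw [abs_of_nonpos (by linarith), max_eq_right (by linarith)]
    ring
  rcases lt_or_ge x 2 with h2 | h2
  · rw [if_neg (by intro h; linarith), if_pos ⟨by linarith, by linarith⟩]
    rw [abs_of_nonneg (by linarith), max_eq_right (by linarith)]
    ring
  · rw [if_neg (by intro h; linarith), if_neg (by intro h; linarith)]
    rw [abs_of_nonneg (by linarith), max_eq_left (by linarith)]
    ring

lemma continuous_cardN : ∀ (p : ℕ), 1 ≤ p → Continuous (cardN p)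
  | 1, _ => by
      have : cardN 1 = fun x => max 0 (1 - |x - 1|) := funext cardN_one
      rw [this]
      exact continuous_const.max ((continuous_const.sub ((continuous_id.sub continuous_const).abs)))
  | p + 2, _ => by
      have ih := continuous_cardN (p + 1) (by omega)
      have : cardN (p + 2) = fun x => x / ((p : ℝ) + 2) * cardN (p + 1) x
          + (((p : ℝ) + 3 - x) / ((p : ℝ) + 2)) * cardN (p + 1) (x - 1) := by
        funext x
        rw [show p + 2 = (p + 1) + 1 from rfl, cardN_succ]
        push_cast
        ring_nf
      rw [this]
      fun_prop

section
variable {f g : ℝ → ℝ} {x : ℝ}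

/-- Local version of `hasDerivAt_of_hasDerivAt_of_ne`: it is enough to have the derivative
on a punctured neighbourhood of radius 1. -/
lemma hasDerivAt_of_hasDerivAt_of_ne_local
    (f_diff : ∀ y, y ≠ x → |y - x| < 1 → HasDerivAt f (g y) y)
    (hf : ContinuousAt f x) (hg : ContinuousAt g x) : HasDerivAt f (g x) x := by
  have hmemr : Ioo x (x + 1) ∈ 𝓝[>] x :=
    Ioo_mem_nhdsGT_of_mem ⟨le_refl x, by linarith⟩
  have hmeml : Ioo (x - 1) x ∈ 𝓝[<] x :=
    Ioo_mem_nhdsLT_of_mem ⟨by linarith, le_refl x⟩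
  have hr : ∀ y ∈ Ioo x (x + 1), HasDerivAt f (g y) y := fun y hy =>
    f_diff y (ne_of_gt hy.1) (by rw [abs_of_pos (by linarith [hy.1] : (0:ℝ) < y - x)]; linarith [hy.2])
  have hl : ∀ y ∈ Ioo (x - 1) x, HasDerivAt f (g y) y := fun y hy =>
    f_diff y (ne_of_lt hy.2) (by rw [abs_of_neg (by linarith [hy.2] : y - x < 0)]; linarith [hy.1]) 
  have A : HasDerivWithinAt f (g x) (Ici x) x := by
    have diff : DifferentiableOn ℝ f (Ioo x (x + 1)) := fun y hy =>
      (hr y hy).differentiableAt.differentiableWithinAt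
    apply hasDerivWithinAt_Ici_of_tendsto_deriv diff hf.continuousWithinAt hmemr
    have tg : Tendsto g (𝓝[>] x) (𝓝 (g x)) := hg.tendsto.mono_left nhdsWithin_le_nhds
    apply tg.congr'
    filter_upwards [hmemr] with y hy
    exact ((hr y hy).deriv).symm
  have B : HasDerivWithinAt f (g x) (Iic x) x := by
    have diff : DifferentiableOn ℝ f (Ioo (x - 1) x) := fun y hy =>
      (hl y hy).differentiableAt.differentiableWithinAt
    apply hasDerivWithinAt_Iic_of_tendsto_deriv diff hf.continuousWithinAt hmeml
    have tg : Tendsto g (𝓝[<] x) (𝓝 (g x)) := hg.tendsto.mono_left nhdsWithin_le_nhds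
    apply tg.congr'
    filter_upwards [hmeml] with y hy
    exact ((hl y hy).deriv).symm
  simpa using B.union A

end
lemma cardN_zero_eventually_const {x : ℝ} (h0 : x ≠ 0) (h1 : x ≠ 1) :
    cardN 0 =ᶠ[𝓝 x] fun _ => cardN 0 x := by
  rcases lt_trichotomy x 0 with h | h | h
  · filter_upwards [Iio_mem_nhds h] with y (hy : y < 0)
    rw [cardN_zero_of_neg 0 hy, cardN_zero_of_neg 0 h]
  · exact absurd h h0
  rcases lt_trichotomy x 1 with h' | h' | h'
  · filter_upwards [Ioo_mem_nhds h h'] with y hy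
    simp only [cardN]
    rw [if_pos ⟨le_of_lt hy.1, hy.2⟩, if_pos ⟨le_of_lt h, h'⟩]
  · exact absurd h' h1
  · filter_upwards [Ioi_mem_nhds h'] with y (hy : 1 < y)
    rw [cardN_zero_of_ge 0 (by push_cast; linarith), cardN_zero_of_ge 0 (by push_cast; linarith)]

lemma hasDerivAt_cardN_of_ne :
    ∀ (p : ℕ) (x : ℝ), (∀ k : ℤ, x ≠ (k : ℝ)) →
      HasDerivAt (cardN (p + 1)) (cardN p x - cardN p (x - 1)) x
  | 0, x, hx => by
      have h0 : x ≠ 0 := by simpa using hx 0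
      have h1 : x ≠ 1 := by simpa using hx 1
      have h2 : x ≠ 2 := by simpa using hx 2
      have h0' : x - 1 ≠ 0 := fun h => h1 (by linarith)
      have h1' : x - 1 ≠ 1 := fun h => h2 (by linarith)
      have E1 := cardN_zero_eventually_const h0 h1
      have E2 : (fun y : ℝ => cardN 0 (y - 1)) =ᶠ[𝓝 x] fun _ => cardN 0 (x - 1) := by
        have := (cardN_zero_eventually_const h0' h1').comp_tendsto
          ((continuous_id.sub continuous_const).tendsto x)
        exact this
      have key : cardN 1 =ᶠ[𝓝 x]
          fun y => y * cardN 0 x + (2 - y) * cardN 0 (x - 1) := by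
        filter_upwards [E1, E2] with y hy1 hy2
        show cardN (0 + 1) y = _
        rw [cardN_succ, hy1, hy2]
        push_cast
        ring
      have : HasDerivAt (fun y : ℝ => y * cardN 0 x + (2 - y) * cardN 0 (x - 1))
          (cardN 0 x - cardN 0 (x - 1)) x := by
        have h1d := (hasDerivAt_id x).mul_const (cardN 0 x)
        have h2d := ((hasDerivAt_const x (2:ℝ)).sub (hasDerivAt_id x)).mul_const (cardN 0 (x-1))
        exact (h1d.add h2d).congr_deriv (by ring)
      exact this.congr_of_eventuallyEq key
  | p + 1, x, hx => by
      have hx1 : ∀ k : ℤ, x - 1 ≠ (k : ℝ) := fun k h => hx (k + 1) (by push_cast; linarith)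
      have ih1 := hasDerivAt_cardN_of_ne p x hx
      have ih2 := hasDerivAt_cardN_of_ne p (x - 1) hx1
      have ih2' : HasDerivAt (fun y : ℝ => cardN (p + 1) (y - 1))
          (cardN p (x - 1) - cardN p (x - 1 - 1)) x := by
        have := ih2.comp x ((hasDerivAt_id x).sub_const 1)
        simp at this ⊢; exact this
      have hp2 : ((p : ℝ) + 2) ≠ 0 := by positivity
      have hA : HasDerivAt (fun y : ℝ => y / ((p : ℝ) + 2) * cardN (p + 1) y)
          ((1 / ((p : ℝ) + 2)) * cardN (p + 1) x
            + x / ((p : ℝ) + 2) * (cardN p x - cardN p (x - 1))) x := by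
        have := ((hasDerivAt_id x).div_const ((p : ℝ) + 2)).mul ih1
        simp at this ⊢; exact this
      have hB : HasDerivAt (fun y : ℝ => (((p : ℝ) + 3 - y) / ((p : ℝ) + 2)) * cardN (p + 1) (y - 1))
          ((-1 / ((p : ℝ) + 2)) * cardN (p + 1) (x - 1)
            + (((p : ℝ) + 3 - x) / ((p : ℝ) + 2)) * (cardN p (x - 1) - cardN p (x - 1 - 1))) x := by
        have hcoef : HasDerivAt (fun y : ℝ => ((p : ℝ) + 3 - y) / ((p : ℝ) + 2))
            (-1 / ((p : ℝ) + 2)) x := by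
          have := ((hasDerivAt_const x ((p : ℝ) + 3)).sub (hasDerivAt_id x)).div_const ((p : ℝ) + 2)
          simpa using this
        exact hcoef.mul ih2'
      have total := hA.add hB
      have hfun : cardN (p + 2) = fun y : ℝ => y / ((p : ℝ) + 2) * cardN (p + 1) y
          + (((p : ℝ) + 3 - y) / ((p : ℝ) + 2)) * cardN (p + 1) (y - 1) := by
        funext y
        rw [show p + 2 = (p + 1) + 1 from rfl, cardN_succ]
        push_cast; ring_nf
      rw [hfun]
      refine total.congr_deriv ?_
      rw [cardN_succ p x, cardN_succ p (x - 1)]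
      have hp1 : ((p : ℝ) + 1) ≠ 0 := by positivity
      field_simp
      ring

lemma hasDerivAt_cardN (p : ℕ) (x : ℝ) :
    HasDerivAt (cardN (p + 2)) (cardN (p + 1) x - cardN (p + 1) (x - 1)) x := by
  by_cases hx : ∀ k : ℤ, x ≠ (k : ℝ)
  · exact hasDerivAt_cardN_of_ne (p + 1) x hx
  push_neg at hx
  obtain ⟨k, rfl⟩ := hx
  apply hasDerivAt_of_hasDerivAt_of_ne_local (g := fun y => cardN (p + 1) y - cardN (p + 1) (y - 1))
  · intro y hy hy1
    apply hasDerivAt_cardN_of_ne (p + 1)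
    intro j hj
    subst hj
    have hab := abs_lt.mp hy1
    have h1 : (j : ℤ) - k < 1 := by exact_mod_cast (by push_cast; linarith [hab.2] : ((j : ℝ) - k : ℝ) < 1)
    have h2 : (-1 : ℤ) < (j : ℤ) - k := by exact_mod_cast (by push_cast; linarith [hab.1] : (-1 : ℝ) < ((j : ℝ) - k : ℝ))
    have : j = k := by omega
    exact hy (by rw [this])
  · exact (continuous_cardN (p + 2) (by omega)).continuousAt
  · exact ((continuous_cardN (p + 1) (by omega)).sub
      ((continuous_cardN (p + 1) (by omega)).comp (continuous_id.sub continuous_const))).continuousAt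
lemma deriv_cardN (p : ℕ) :
    deriv (cardN (p + 2)) = fun x => cardN (p + 1) x - cardN (p + 1) (x - 1) :=
  funext fun x => (hasDerivAt_cardN p x).deriv

lemma contDiff_cardN : ∀ (k p : ℕ), k < p → ContDiff ℝ k (cardN p)
  | 0, p, h => contDiff_zero.mpr (continuous_cardN p (by omega))
  | k + 1, p, h => by
      obtain ⟨q, rfl⟩ : ∃ q, p = q + 2 := ⟨p - 2, by omega⟩
      have hdiff : Differentiable ℝ (cardN (q + 2)) :=
        fun x => (hasDerivAt_cardN q x).differentiableAt
      have hder : ContDiff ℝ k (deriv (cardN (q + 2))) := by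
        rw [deriv_cardN]
        exact (contDiff_cardN k (q + 1) (by omega)).sub
          ((contDiff_cardN k (q + 1) (by omega)).comp (contDiff_id.sub contDiff_const))
      have := contDiff_succ_iff_deriv.mpr ⟨hdiff, by simp, hder⟩
      exact_mod_cast this

lemma iteratedDeriv_add' {k : ℕ} {f g : ℝ → ℝ} (hf : ContDiff ℝ k f) (hg : ContDiff ℝ k g)
    (x : ℝ) : iteratedDeriv k (fun y => f y + g y) x = iteratedDeriv k f x + iteratedDeriv k g x := by
  simp only [← iteratedDerivWithin_univ]
  exact iteratedDerivWithin_add (Set.mem_univ x) uniqueDiffOn_univ hf.contDiffWithinAt hg.contDiffWithinAt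

lemma iteratedDeriv_sub' {k : ℕ} {f g : ℝ → ℝ} (hf : ContDiff ℝ k f) (hg : ContDiff ℝ k g)
    (x : ℝ) : iteratedDeriv k (fun y => f y - g y) x = iteratedDeriv k f x - iteratedDeriv k g x := by
  simp only [← iteratedDerivWithin_univ]
  exact iteratedDerivWithin_sub (Set.mem_univ x) uniqueDiffOn_univ hf.contDiffWithinAt hg.contDiffWithinAt

lemma iteratedDeriv_cmul' {k : ℕ} {f : ℝ → ℝ} (hf : ContDiff ℝ k f) (c : ℝ)
    (x : ℝ) : iteratedDeriv k (fun y => c * f y) x = c * iteratedDeriv k f x := by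
  simp only [← iteratedDerivWithin_univ]
  exact iteratedDerivWithin_const_mul (Set.mem_univ x) uniqueDiffOn_univ c hf.contDiffWithinAt

lemma iteratedDeriv_cardN_zero :
    ∀ (k p : ℕ), k < p → ∀ {x : ℝ}, (x ≤ 0 ∨ ((p : ℝ) + 1) ≤ x) →
      iteratedDeriv k (cardN p) x = 0
  | 0, p, h, x, hx => by
      rw [iteratedDeriv_zero]
      rcases hx with hx | hx
      · exact cardN_zero_of_nonpos p (by omega) hx
      · exact cardN_zero_of_ge p hx
  | k + 1, p, h, x, hx => by
      obtain ⟨q, rfl⟩ : ∃ q, p = q + 2 := ⟨p - 2, by omega⟩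
      rw [iteratedDeriv_succ', deriv_cardN]
      have h1 : ContDiff ℝ k (cardN (q + 1)) := contDiff_cardN k (q + 1) (by omega)
      have h2 : ContDiff ℝ k (fun y : ℝ => cardN (q + 1) (y - 1)) :=
        h1.comp (contDiff_id.sub contDiff_const)
      rw [iteratedDeriv_sub' h1 h2]
      have hk : k < q + 1 := by omega
      have hv : iteratedDeriv k (fun y : ℝ => cardN (q + 1) (y - 1)) x
          = iteratedDeriv k (cardN (q + 1)) (x - 1) := by
        have e2 : (fun y : ℝ => cardN (q + 1) (y - 1))
            = fun y : ℝ => cardN (q + 1) (y + (-1)) := by funext y; ring_nf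
        rw [e2]
        have := congrFun (iteratedDeriv_comp_add_const k (cardN (q + 1)) (-1)) x
        rw [this]
        ring_nf
      rw [hv]
      rcases hx with hx | hx
      · rw [iteratedDeriv_cardN_zero k (q + 1) hk (Or.inl hx),
          iteratedDeriv_cardN_zero k (q + 1) hk (Or.inl (by linarith))]
        ring
      · push_cast at hx
        rw [iteratedDeriv_cardN_zero k (q + 1) hk (Or.inr (by push_cast; linarith)),
          iteratedDeriv_cardN_zero k (q + 1) hk (Or.inr (by push_cast; linarith))]
        ring

lemma iteratedDeriv_cardN_affine {k p : ℕ} (hk : k < p) {m : ℝ} (hm : m ≠ 0) (c x : ℝ) :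
    iteratedDeriv k (fun s => cardN p (m * s + c)) x
      = m ^ k * iteratedDeriv k (cardN p) (m * x + c) := by
  have e1 : (fun s : ℝ => cardN p (m * s + c))
      = fun z : ℝ => (fun u : ℝ => cardN p (m * u)) (z + c / m) := by
    funext s
    show cardN p (m * s + c) = cardN p (m * (s + c / m))
    congr 1
    field_simp
  calc iteratedDeriv k (fun s => cardN p (m * s + c)) x
      = iteratedDeriv k (fun z : ℝ => (fun u : ℝ => cardN p (m * u)) (z + c / m)) x := by rw [e1]
    _ = iteratedDeriv k (fun u : ℝ => cardN p (m * u)) (x + c / m) :=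
        congrFun (iteratedDeriv_comp_add_const k (fun u : ℝ => cardN p (m * u)) (c / m)) x
    _ = m ^ k * iteratedDeriv k (cardN p) (m * (x + c / m)) :=
        congrFun (iteratedDeriv_comp_const_mul (contDiff_cardN k p hk) m) (x + c / m)
    _ = m ^ k * iteratedDeriv k (cardN p) (m * x + c) := by
        rw [show m * (x + c / m) = m * x + c by field_simp]
lemma cardN_sum_step (p : ℕ) (c : ℕ → ℝ) {x : ℝ} (hx : 0 ≤ x) (hx1 : x < 1) :
    ∑ u ∈ range (p + 2), c u * cardN (p + 1) (x + u)
      = ∑ u ∈ range (p + 1),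
          ((c u * (x + u) + c (u + 1) * ((p : ℝ) + 1 - x - u)) / ((p : ℝ) + 1))
            * cardN p (x + u) := by
  have hp1 : ((p : ℝ) + 1) ≠ 0 := by positivity
  have expand : ∀ u ∈ range (p + 2), c u * cardN (p + 1) (x + u)
      = c u * ((x + u) / ((p : ℝ) + 1)) * cardN p (x + u)
        + c u * ((((p : ℝ) + 2) - (x + u)) / ((p : ℝ) + 1)) * cardN p (x + u - 1) := by
    intro u _
    rw [cardN_succ]
    ring
  have h1 : ∑ u ∈ range (p + 2), c u * ((x + u) / ((p : ℝ) + 1)) * cardN p (x + u)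
      = ∑ u ∈ range (p + 1), c u * ((x + u) / ((p : ℝ) + 1)) * cardN p (x + u) := by
    rw [Finset.sum_range_succ, cardN_zero_of_ge p (by push_cast; linarith)]
    ring
  have h2 : ∑ u ∈ range (p + 2), c u * ((((p : ℝ) + 2) - (x + u)) / ((p : ℝ) + 1))
        * cardN p (x + u - 1)
      = ∑ u ∈ range (p + 1), c (u + 1) * ((((p : ℝ) + 1) - (x + u)) / ((p : ℝ) + 1))
        * cardN p (x + u) := by
    rw [Finset.sum_range_succ']
    have hz : cardN p (x + ((0 : ℕ) : ℝ) - 1) = 0 := by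
      apply cardN_zero_of_neg
      push_cast
      linarith
    rw [hz, mul_zero, add_zero]
    refine Finset.sum_congr rfl fun u hu => ?_
    have harg : x + (((u : ℝ) + 1)) - 1 = x + u := by ring
    push_cast
    rw [harg]
    ring
  calc ∑ u ∈ range (p + 2), c u * cardN (p + 1) (x + u)
      = ∑ u ∈ range (p + 2), (c u * ((x + u) / ((p : ℝ) + 1)) * cardN p (x + u)
          + c u * ((((p : ℝ) + 2) - (x + u)) / ((p : ℝ) + 1)) * cardN p (x + u - 1)) :=
        Finset.sum_congr rfl expand
    _ = _ + _ := Finset.sum_add_distrib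
    _ = _ := by
        rw [h1, h2, ← Finset.sum_add_distrib]
        refine Finset.sum_congr rfl fun u hu => ?_
        field_simp
        ring

lemma cardN_partition : ∀ (p : ℕ) {x : ℝ}, 0 ≤ x → x < 1 →
    ∑ u ∈ range (p + 1), cardN p (x + u) = 1
  | 0, x, hx, hx1 => by
      rw [Finset.sum_range_one]
      simp only [Nat.cast_zero, add_zero, cardN]
      rw [if_pos ⟨hx, hx1⟩]
  | p + 1, x, hx, hx1 => by
      have step := cardN_sum_step p (fun _ => 1) hx hx1
      simp only [one_mul] at step
      rw [step]
      have e : ∀ u ∈ range (p + 1), (x + (u : ℝ) + ((p : ℝ) + 1 - x - u)) / ((p : ℝ) + 1)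
            * cardN p (x + u) = cardN p (x + u) := by
        intro u _
        have hp1 : ((p : ℝ) + 1) ≠ 0 := by positivity
        field_simp
        ring
      rw [Finset.sum_congr rfl e]
      exact cardN_partition p hx hx1

lemma cardN_greville : ∀ (p : ℕ), 1 ≤ p → ∀ {x : ℝ}, 0 ≤ x → x < 1 →
    ∑ u ∈ range (p + 1), (((p : ℝ) + 1) / 2 - u) * cardN p (x + u) = x
  | 1, _, x, hx, hx1 => by
      rw [Finset.sum_range_succ, Finset.sum_range_one]
      push_cast
      rw [cardN_one, cardN_one]
      have h1 : |x + 0 - 1| = 1 - x := by rw [abs_of_nonpos (by linarith)]; ring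
      have h2 : |x + 1 - 1| = x := by rw [abs_of_nonneg (by linarith)]; ring
      rw [h1, h2, max_eq_right (by linarith : (0:ℝ) ≤ 1 - (1 - x))]
      ring_nf
  | p + 2, _, x, hx, hx1 => by
      have IH := cardN_greville (p + 1) (by omega) hx hx1
      have S0 := cardN_partition (p + 1) hx hx1
      have hp2 : ((p : ℝ) + 2) ≠ 0 := by positivity
      have hT : ∑ u ∈ range (p + 2), (u : ℝ) * cardN (p + 1) (x + u)
          = ((p : ℝ) + 2) / 2 - x := by
        have hsplit : ∑ u ∈ range (p + 2), ((((p + 1 : ℕ) : ℝ) + 1) / 2 - u)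
              * cardN (p + 1) (x + u)
            = (((p + 1 : ℕ) : ℝ) + 1) / 2 * ∑ u ∈ range (p + 2), cardN (p + 1) (x + u)
              - ∑ u ∈ range (p + 2), (u : ℝ) * cardN (p + 1) (x + u) := by
          rw [Finset.mul_sum, ← Finset.sum_sub_distrib]
          exact Finset.sum_congr rfl fun u _ => by ring
        rw [hsplit, S0] at IH
        push_cast at IH
        linarith
      have key := cardN_sum_step (p + 1) (fun u => ((p : ℝ) + 3) / 2 - u) hx hx1
      have goal_eq : ∑ u ∈ range (p + 2 + 1), ((((p + 2 : ℕ) : ℝ) + 1) / 2 - u)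
            * cardN (p + 2) (x + u)
          = ∑ u ∈ range (p + 1 + 2), (fun u : ℕ => ((p : ℝ) + 3) / 2 - (u : ℝ)) u
            * cardN (p + 1 + 1) (x + u) := by
        refine Finset.sum_congr rfl fun u _ => ?_
        push_cast
        ring_nf
      rw [goal_eq, key]
      have hsplit2 : ∀ u ∈ range (p + 1 + 1),
          (((fun u : ℕ => ((p : ℝ) + 3) / 2 - (u : ℝ)) u * (x + u)
              + (fun u : ℕ => ((p : ℝ) + 3) / 2 - (u : ℝ)) (u + 1)
                * (((p + 1 : ℕ) : ℝ) + 1 - x - u)) / (((p + 1 : ℕ) : ℝ) + 1))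
            * cardN (p + 1) (x + u)
          = (x / ((p : ℝ) + 2) + ((p : ℝ) + 1) / 2) * cardN (p + 1) (x + u)
            - (1 - 1 / ((p : ℝ) + 2)) * ((u : ℝ) * cardN (p + 1) (x + u)) := by
        intro u _
        push_cast
        field_simp
        ring
      rw [Finset.sum_congr rfl hsplit2, Finset.sum_sub_distrib, ← Finset.mul_sum,
        ← Finset.mul_sum, S0, hT]
      field_simp
      ring
lemma bspline_eq_cardN {t : ℕ → ℝ} {m : ℝ} (hm : 0 < m) (ht : ∀ i, t i = (i : ℝ) / m) :
    ∀ (p i : ℕ) (x : ℝ), bspline t p i x = cardN p (m * x - i)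
  | 0, i, x => by
      rw [bspline]
      show _ = cardN 0 (m * x - i)
      rw [cardN]
      have h1 : t i ≤ x ↔ 0 ≤ m * x - (i : ℝ) := by
        rw [ht i, div_le_iff₀ hm]
        constructor <;> intro <;> nlinarith
      have h2 : x < t (i + 1) ↔ m * x - (i : ℝ) < 1 := by
        rw [ht (i + 1), lt_div_iff₀ hm]
        push_cast
        constructor <;> intro <;> nlinarith
      rw [if_congr (and_congr h1 h2) rfl rfl]
  | p + 1, i, x => by
      rw [bspline]
      rw [bspline_eq_cardN hm ht p i x, bspline_eq_cardN hm ht p (i + 1) x, cardN_succ]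
      rw [ht i, ht (i + p + 1), ht (i + p + 2), ht (i + 1)]
      have hp1 : ((p : ℝ) + 1) ≠ 0 := by positivity
      have hmne : m ≠ 0 := ne_of_gt hm
      have harg : m * x - ((i + 1 : ℕ) : ℝ) = m * x - i - 1 := by push_cast; ring
      rw [harg]
      have c1 : (x - (i : ℝ) / m) / (((i + p + 1 : ℕ) : ℝ) / m - (i : ℝ) / m)
          = (m * x - (i : ℝ)) / ((p : ℝ) + 1) := by
        push_cast
        rw [show ((i : ℝ) + p + 1) / m - (i : ℝ) / m = ((p : ℝ) + 1) / m by ring,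
          div_div_eq_mul_div]
        congr 1
        field_simp
      have c2 : (((i + p + 2 : ℕ) : ℝ) / m - x) / (((i + p + 2 : ℕ) : ℝ) / m
            - ((i + 1 : ℕ) : ℝ) / m)
          = ((p : ℝ) + 2 - (m * x - (i : ℝ))) / ((p : ℝ) + 1) := by
        push_cast
        rw [show ((i : ℝ) + p + 2) / m - ((i : ℝ) + 1) / m = ((p : ℝ) + 1) / m by ring,
          div_div_eq_mul_div]
        congr 1
        field_simp
        ring
      rw [c1, c2]

lemma cardN_int_sum_full (p : ℕ) : ∑ u ∈ range (p + 1), cardN p (u : ℝ) = 1 := by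
  have := cardN_partition p (x := 0) le_rfl one_pos
  rw [← this]
  exact Finset.sum_congr rfl fun u _ => by rw [zero_add]

lemma cardN_int_sum_mul_full (p : ℕ) (hp : 1 ≤ p) :
    ∑ u ∈ range (p + 1), (u : ℝ) * cardN p (u : ℝ) = ((p : ℝ) + 1) / 2 := by
  have hg := cardN_greville p hp (x := 0) le_rfl one_pos
  have hsplit : ∑ u ∈ range (p + 1), (((p : ℝ) + 1) / 2 - u) * cardN p (0 + u)
      = ((p : ℝ) + 1) / 2 * ∑ u ∈ range (p + 1), cardN p (u : ℝ)
        - ∑ u ∈ range (p + 1), (u : ℝ) * cardN p (u : ℝ) := by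
    rw [Finset.mul_sum, ← Finset.sum_sub_distrib]
    exact Finset.sum_congr rfl fun u _ => by rw [zero_add]; ring
  rw [hsplit, cardN_int_sum_full p] at hg
  linarith

lemma cardN_window_sum (p : ℕ) (hp : 1 ≤ p) :
    ∑ u ∈ range p, cardN p ((u : ℝ) + 1) = 1 := by
  have h := cardN_int_sum_full p
  rw [Finset.sum_range_succ'] at h
  rw [cardN_zero_of_nonpos p hp (by norm_num), add_zero] at h
  calc ∑ u ∈ range p, cardN p ((u : ℝ) + 1)
      = ∑ u ∈ range p, cardN p (((u + 1 : ℕ) : ℝ)) :=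
        Finset.sum_congr rfl fun u _ => by push_cast; ring_nf
    _ = 1 := h

lemma cardN_window_sum_mul (p : ℕ) (hp : 1 ≤ p) :
    ∑ u ∈ range p, (u : ℝ) * cardN p ((u : ℝ) + 1) = ((p : ℝ) - 1) / 2 := by
  have h := cardN_int_sum_mul_full p hp
  rw [Finset.sum_range_succ'] at h
  rw [show ((0 : ℕ) : ℝ) * cardN p ((0 : ℕ) : ℝ) = 0 by norm_num, add_zero] at h
  have h' : ∑ u ∈ range p, (((u : ℝ) + 1) * cardN p ((u : ℝ) + 1)) = ((p : ℝ) + 1) / 2 := by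
    calc ∑ u ∈ range p, (((u : ℝ) + 1) * cardN p ((u : ℝ) + 1))
        = ∑ u ∈ range p, ((u + 1 : ℕ) : ℝ) * cardN p (((u + 1 : ℕ) : ℝ)) :=
          Finset.sum_congr rfl fun u _ => by push_cast; ring_nf
      _ = ((p : ℝ) + 1) / 2 := h
  have hw := cardN_window_sum p hp
  have hsplit : ∑ u ∈ range p, (((u : ℝ) + 1) * cardN p ((u : ℝ) + 1))
      = ∑ u ∈ range p, (u : ℝ) * cardN p ((u : ℝ) + 1) + ∑ u ∈ range p, cardN p ((u : ℝ) + 1) := by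
    rw [← Finset.sum_add_distrib]
    exact Finset.sum_congr rfl fun u _ => by ring
  rw [hsplit, hw] at h'
  linarith

/-- Theorem 2 of the paper: with uniform knots `t_i = i/(n+p)` and control points
`x_i = x_0 + i·H`, `x_0 = -L/2 - L(p-1)/(2(n-p))`, `H = L/(n-p)`, `y_i = y_{n-p+i}`,
the plane B-spline curve spans exactly `[-L/2, L/2]` horizontally and its `y`-coordinate
matches at the two ends up to the `(p-1)`-st derivative. -/
theorem periodic_bspline_curve_uniform (p n : ℕ) (hp : 1 ≤ p) (hn : p < n)
    (L : ℝ) (t : ℕ → ℝ) (ht : ∀ i, t i = (i : ℝ) / (n + p))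
    (x y : ℕ → ℝ)
    (hx : ∀ i < n, x i = (-(L / 2) - L * ((p : ℝ) - 1) / (2 * ((n : ℝ) - p)))
            + (i : ℝ) * (L / ((n : ℝ) - p)))
    (hy : ∀ i < p, y i = y (n - p + i))
    (X Y : ℝ → ℝ)
    (hX : X = fun s => ∑ i ∈ Finset.range n, bspline t p i s * x i)
    (hY : Y = fun s => ∑ i ∈ Finset.range n, bspline t p i s * y i) :
    X (t p) = -(L / 2) ∧ X (t n) = L / 2 ∧
      ∀ k < p, iteratedDeriv k Y (t p) = iteratedDeriv k Y (t n) := by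
  have hpR : (1 : ℝ) ≤ (p : ℝ) := by exact_mod_cast hp
  have hnpR : (p : ℝ) < (n : ℝ) := by exact_mod_cast hn
  set m : ℝ := (n : ℝ) + (p : ℝ) with hm_def
  have hm0 : (0 : ℝ) < m := by rw [hm_def]; linarith
  have hmne : m ≠ 0 := ne_of_gt hm0
  have hnp0 : (n : ℝ) - (p : ℝ) ≠ 0 := sub_ne_zero.mpr (ne_of_gt hnpR)
  have hBN : ∀ (j : ℕ) (s : ℝ), bspline t p j s = cardN p (m * s - j) :=
    fun j s => bspline_eq_cardN hm0 (fun i => ht i) p j s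
  have hmt : ∀ j : ℕ, m * t j = (j : ℝ) := fun j => by
    rw [ht j]
    field_simp
  -- window sums
  have B1 := cardN_window_sum p hp
  have B2 := cardN_window_sum_mul p hp
  have hsub : range p ⊆ range n := Finset.range_subset_range.mpr hn.le
  refine ⟨?_, ?_, ?_⟩
  · -- X (t p) = -(L/2)
    rw [hX]
    simp only [hBN, hmt p]
    have hzero : ∀ i ∈ range n, i ∉ range p → cardN p ((p : ℝ) - i) * x i = 0 := by
      intro i _ hi
      have hip : p ≤ i := by simpa using hi
      have : ((p : ℝ) - i) ≤ 0 := by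
        have : (p : ℝ) ≤ i := by exact_mod_cast hip
        linarith
      rw [cardN_zero_of_nonpos p hp this, zero_mul]
    rw [← Finset.sum_subset hsub hzero]
    rw [← Finset.sum_range_reflect (fun i => cardN p ((p : ℝ) - i) * x i) p]
    have main : ∀ j ∈ range p, cardN p ((p : ℝ) - ((p - 1 - j : ℕ) : ℝ)) * x (p - 1 - j)
        = ((-(L / 2) - L * ((p : ℝ) - 1) / (2 * ((n : ℝ) - p)))
              + ((p : ℝ) - 1) * (L / ((n : ℝ) - p))) * cardN p ((j : ℝ) + 1)
          - (L / ((n : ℝ) - p)) * ((j : ℝ) * cardN p ((j : ℝ) + 1)) := by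
      intro j hj
      have hjp : j < p := Finset.mem_range.mp hj
      have hcast : ((p - 1 - j : ℕ) : ℝ) = (p : ℝ) - 1 - j := by
        have h1 : p - 1 - j + j + 1 = p := by omega
        have h2 : ((p - 1 - j + j + 1 : ℕ) : ℝ) = (p : ℝ) := by exact_mod_cast congrArg (fun z : ℕ => (z : ℝ)) h1
        push_cast at h2
        linarith
      have hlt : p - 1 - j < n := by omega
      rw [hx _ hlt, hcast]
      rw [show (p : ℝ) - ((p : ℝ) - 1 - j) = (j : ℝ) + 1 by ring]
      ring
    rw [Finset.sum_congr rfl main, Finset.sum_sub_distrib, ← Finset.mul_sum, ← Finset.mul_sum,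
      B1, B2]
    field_simp
    ring
  · -- X (t n) = L/2
    rw [hX]
    simp only [hBN, hmt n]
    rw [← Finset.sum_range_reflect (fun i => cardN p ((n : ℝ) - i) * x i) n]
    have hzero : ∀ j ∈ range n, j ∉ range p →
        cardN p ((n : ℝ) - ((n - 1 - j : ℕ) : ℝ)) * x (n - 1 - j) = 0 := by
      intro j hjn hj
      have hjp : p ≤ j := by simpa using hj
      have hjn' : j < n := Finset.mem_range.mp hjn
      have hcast : ((n - 1 - j : ℕ) : ℝ) = (n : ℝ) - 1 - j := by
        have h1 : n - 1 - j + j + 1 = n := by omega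
        have h2 : ((n - 1 - j + j + 1 : ℕ) : ℝ) = (n : ℝ) := by exact_mod_cast congrArg (fun z : ℕ => (z : ℝ)) h1
        push_cast at h2
        linarith
      rw [hcast, show (n : ℝ) - ((n : ℝ) - 1 - j) = (j : ℝ) + 1 by ring]
      have : ((p : ℝ) + 1) ≤ (j : ℝ) + 1 := by
        have : (p : ℝ) ≤ j := by exact_mod_cast hjp
        linarith
      rw [cardN_zero_of_ge p this, zero_mul]
    rw [← Finset.sum_subset hsub hzero]
    have main : ∀ j ∈ range p, cardN p ((n : ℝ) - ((n - 1 - j : ℕ) : ℝ)) * x (n - 1 - j)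
        = ((-(L / 2) - L * ((p : ℝ) - 1) / (2 * ((n : ℝ) - p)))
              + ((n : ℝ) - 1) * (L / ((n : ℝ) - p))) * cardN p ((j : ℝ) + 1)
          - (L / ((n : ℝ) - p)) * ((j : ℝ) * cardN p ((j : ℝ) + 1)) := by
      intro j hj
      have hjp : j < p := Finset.mem_range.mp hj
      have hcast : ((n - 1 - j : ℕ) : ℝ) = (n : ℝ) - 1 - j := by
        have h1 : n - 1 - j + j + 1 = n := by omega
        have h2 : ((n - 1 - j + j + 1 : ℕ) : ℝ) = (n : ℝ) := by exact_mod_cast congrArg (fun z : ℕ => (z : ℝ)) h1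
        push_cast at h2
        linarith
      have hlt : n - 1 - j < n := by omega
      rw [hx _ hlt, hcast]
      rw [show (n : ℝ) - ((n : ℝ) - 1 - j) = (j : ℝ) + 1 by ring]
      ring
    rw [Finset.sum_congr rfl main, Finset.sum_sub_distrib, ← Finset.mul_sum, ← Finset.mul_sum,
      B1, B2]
    field_simp
    ring
  · -- derivatives of Y match
    intro k hk
    have hYe : Y = fun s => ∑ i ∈ range n, cardN p (m * s - i) * y i := by
      rw [hY]
      funext s
      exact Finset.sum_congr rfl fun i _ => by rw [hBN]
    have haff : ∀ c : ℝ, ContDiff ℝ k (fun s : ℝ => cardN p (m * s + c)) := by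
      intro c
      exact (contDiff_cardN k p hk).comp
        ((contDiff_const.mul contDiff_id).add contDiff_const)
    have hYc : ContDiff ℝ k Y := by
      rw [hYe]
      apply ContDiff.sum
      intro i _
      have h1 : ContDiff ℝ k (fun s : ℝ => cardN p (m * s + (-(i : ℝ)))) := haff (-(i : ℝ))
      have e : (fun s : ℝ => cardN p (m * s + (-(i : ℝ)))) = fun s : ℝ => cardN p (m * s - i) := by
        funext s; ring_nf
      rw [e] at h1
      exact h1.mul contDiff_const
    set s0 : ℝ := ((n : ℝ) - (p : ℝ)) / m with hs0_def
    have hms0 : m * s0 = (n : ℝ) - (p : ℝ) := mul_div_cancel₀ _ hmne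
    set W : ℝ → ℝ := fun s => y (n - p - 1) * cardN p (m * s + 1) - y p * cardN p (m * s + -(p : ℝ))
      with hW_def
    have hWc : ContDiff ℝ k W := by
      rw [hW_def]
      exact (contDiff_const.mul (haff 1)).sub (contDiff_const.mul (haff (-(p : ℝ))))
    have hts : t p + s0 = t n := by
      rw [ht p, ht n, hs0_def, ← add_div]
      congr 1
      ring
    have hlocal : ∀ s : ℝ, (p : ℝ) - 1 < m * s → m * s < (p : ℝ) + 1 → Y (s + s0) = Y s + W s := by
      intro s h1 h2
      rw [hYe]
      simp only
      have hmss : m * (s + s0) = m * s + ((n : ℝ) - (p : ℝ)) := by rw [mul_add, hms0]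
      have hnsum : n - p - 1 + (p + 1) = n := by omega
      have L1 : ∑ i ∈ range n, cardN p (m * (s + s0) - i) * y i
          = ∑ j ∈ range (p + 1), cardN p (m * s + 1 - j) * y (n - p - 1 + j) := by
        have e0 : ∑ i ∈ range n, cardN p (m * (s + s0) - i) * y i
            = ∑ i ∈ range (n - p - 1 + (p + 1)), cardN p (m * (s + s0) - i) * y i := by
          rw [hnsum]
        rw [e0, Finset.sum_range_add]
        have hz : ∑ i ∈ range (n - p - 1), cardN p (m * (s + s0) - i) * y i = 0 := by
          apply Finset.sum_eq_zero
          intro i hi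
          have hi' : i < n - p - 1 := Finset.mem_range.mp hi
          have hip : (i : ℝ) + (p : ℝ) + 2 ≤ (n : ℝ) := by
            have h3 : i + p + 2 ≤ n := by omega
            exact_mod_cast h3
          have hge : ((p : ℝ) + 1) ≤ m * (s + s0) - i := by
            rw [hmss]
            linarith
          rw [cardN_zero_of_ge p hge, zero_mul]
        rw [hz, zero_add]
        refine Finset.sum_congr rfl fun j hj => ?_
        have hcast : ((n - p - 1 + j : ℕ) : ℝ) = (n : ℝ) - (p : ℝ) - 1 + j := by
          have h1' : n - p - 1 + j + p + 1 = n + j := by omega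
          have h2' : ((n - p - 1 + j + p + 1 : ℕ) : ℝ) = ((n + j : ℕ) : ℝ) := by
            exact_mod_cast congrArg (fun z : ℕ => (z : ℝ)) h1'
          push_cast at h2' ⊢
          linarith
        have harg : m * (s + s0) - ((n - p - 1 + j : ℕ) : ℝ) = m * s + 1 - j := by
          rw [hmss, hcast]
          ring
        rw [harg]
      have L2 : ∑ i ∈ range n, cardN p (m * s - i) * y i
          = ∑ i ∈ range (p + 1), cardN p (m * s - i) * y i := by
        symm
        apply Finset.sum_subset (Finset.range_subset_range.mpr (by omega : p + 1 ≤ n))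
        intro i _ hi
        have hip : p + 1 ≤ i := by simpa using hi
        have : m * s - i < 0 := by
          have : (p : ℝ) + 1 ≤ i := by exact_mod_cast hip
          linarith
        rw [cardN_zero_of_neg p this, zero_mul]
      rw [L1, L2]
      rw [Finset.sum_range_succ' (fun j => cardN p (m * s + 1 - j) * y (n - p - 1 + j)) p]
      rw [Finset.sum_range_succ (fun i => cardN p (m * s - i) * y i) p]
      have e : ∀ j ∈ range p, cardN p (m * s + 1 - ((j + 1 : ℕ) : ℝ)) * y (n - p - 1 + (j + 1))
          = cardN p (m * s - j) * y j := by
        intro j hj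
        have hjp : j < p := Finset.mem_range.mp hj
        have hidx : n - p - 1 + (j + 1) = n - p + j := by omega
        have harg : m * s + 1 - ((j + 1 : ℕ) : ℝ) = m * s - j := by push_cast; ring
        rw [hidx, harg, ← hy j hjp]
      rw [Finset.sum_congr rfl e]
      have h0 : cardN p (m * s + 1 - ((0 : ℕ) : ℝ)) * y (n - p - 1 + 0)
          = cardN p (m * s + 1) * y (n - p - 1) := by norm_num
      rw [h0]
      simp only [hW_def]
      have hatom : cardN p (m * s + -(p : ℝ)) = cardN p (m * s - (p : ℝ)) := by
        norm_num [sub_eq_add_neg]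
      rw [hatom]
      ring
    -- pass to a neighbourhood
    have hEv : (fun s => Y (s + s0)) =ᶠ[𝓝 (t p)] fun s => Y s + W s := by
      have hmem : Set.Ioo (((p : ℝ) - 1) / m) (((p : ℝ) + 1) / m) ∈ 𝓝 (t p) := by
        apply Ioo_mem_nhds
        · rw [ht p]
          exact (div_lt_div_iff_of_pos_right hm0).mpr (by linarith)
        · rw [ht p]
          exact (div_lt_div_iff_of_pos_right hm0).mpr (by linarith)
      filter_upwards [hmem] with s hs
      have h1 : (p : ℝ) - 1 < m * s := by
        have := hs.1
        rw [div_lt_iff₀ hm0] at this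
        linarith
      have h2 : m * s < (p : ℝ) + 1 := by
        have := hs.2
        rw [lt_div_iff₀ hm0] at this
        linarith
      exact hlocal s h1 h2
    have hWzero : iteratedDeriv k W (t p) = 0 := by
      have hc1 : iteratedDeriv k (fun s => y (n - p - 1) * cardN p (m * s + 1)) (t p) = 0 := by
        rw [iteratedDeriv_cmul' (haff 1) (y (n - p - 1)) (t p),
          iteratedDeriv_cardN_affine hk hmne 1 (t p), hmt p,
          iteratedDeriv_cardN_zero k p hk (Or.inr (le_refl _))]
        ring
      have hc2 : iteratedDeriv k (fun s => y p * cardN p (m * s + -(p : ℝ))) (t p) = 0 := by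
        rw [iteratedDeriv_cmul' (haff (-(p : ℝ))) (y p) (t p),
          iteratedDeriv_cardN_affine hk hmne (-(p : ℝ)) (t p), hmt p,
          iteratedDeriv_cardN_zero k p hk (Or.inl (by linarith))]
        ring
      rw [hW_def]
      rw [iteratedDeriv_sub' (contDiff_const.mul (haff 1)) (contDiff_const.mul (haff (-(p : ℝ)))) (t p),
        hc1, hc2, sub_zero]
    calc iteratedDeriv k Y (t p)
        = iteratedDeriv k Y (t p) + iteratedDeriv k W (t p) := by rw [hWzero, add_zero]
      _ = iteratedDeriv k (fun s => Y s + W s) (t p) := (iteratedDeriv_add' hYc hWc (t p)).symm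
      _ = iteratedDeriv k (fun s => Y (s + s0)) (t p) := (hEv.iteratedDeriv_eq k).symm
      _ = iteratedDeriv k Y (t p + s0) := congrFun (iteratedDeriv_comp_add_const k Y s0) (t p)
      _ = iteratedDeriv k Y (t n) := by rw [hts]
end

section
/- Let p ≥ 1 and n ≥ p, and let the knots be uniform: t_i := a + i·h for i = 0, …, n+p, with a ∈ ℝ and h > 0. Then the B-spline functions of degree p satisfy Σ_{i=0}^{p−1} i·B_i^p(t_p) = (p−1)/2. -/
noncomputable def tI : ℕ → ℝ := fun j => (j : ℝ)

lemma nsupport (p : ℕ) : ∀ (i : ℕ) (x : ℝ), (x < i ∨ (i : ℝ) + p + 1 ≤ x) →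
    bspline tI p i x = 0 := by
  induction p with
  | zero =>
    intro i x hx
    simp only [bspline, tI]
    refine if_neg ?_
    rintro ⟨h1, h2⟩
    push_cast at h2
    rcases hx with h | h <;> linarith
  | succ p ih =>
    intro i x hx
    simp only [bspline]
    rw [ih i x ?_, ih (i+1) x ?_]
    · ring
    · rcases hx with h | h
      · left; push_cast; linarith
      · right; push_cast at h ⊢; linarith
    · rcases hx with h | h
      · left; exact h
      · right; push_cast at h ⊢; linarith

lemma ntrans (p : ℕ) : ∀ (i : ℕ) (x : ℝ),
    bspline tI p (i + 1) (x + 1) = bspline tI p i x := by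
  induction p with
  | zero =>
    intro i x
    simp only [bspline, tI]
    congr 1
    push_cast
    rw [eq_iff_iff]
    constructor <;> rintro ⟨h1, h2⟩ <;> constructor <;> linarith
  | succ p ih =>
    intro i x
    simp only [bspline, tI]
    rw [show i + 1 + p + 1 = (i + p + 1) + 1 by ring, show i + 1 + p + 2 = (i + p + 2) + 1 by ring,
      ih i x, show i + 1 + 1 = (i + 1) + 1 by ring, ih (i+1) x]
    push_cast
    ring_nf

lemma nleft (p i : ℕ) : bspline tI (p + 1) i (i : ℝ) = 0 := by
  simp only [bspline]
  rw [nsupport p (i+1) (i : ℝ) (Or.inl (by push_cast; linarith))]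
  simp only [tI]
  ring

lemma nmain : ∀ p : ℕ, 1 ≤ p →
    (∑ i ∈ Finset.range p, bspline tI p i (p : ℝ)) = 1 ∧
    (∑ i ∈ Finset.range p, (i : ℝ) * bspline tI p i (p : ℝ)) = ((p : ℝ) - 1) / 2 := by
  intro p
  induction p with
  | zero => intro h; exact absurd h (by norm_num)
  | succ p ih =>
    intro _
    rcases Nat.eq_zero_or_pos p with rfl | hp
    · norm_num
      simp only [bspline, tI]
      norm_num
    obtain ⟨hT, hS⟩ := ih hp
    have hp1 : ((p : ℝ) + 1) ≠ 0 := by positivity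
    have key : ∀ i : ℕ, bspline tI (p + 1) i ((p : ℝ) + 1) =
        ((p : ℝ) + 1 - (i : ℝ)) / ((p : ℝ) + 1) * bspline tI p i ((p : ℝ) + 1)
          + ((i : ℝ) + 1) / ((p : ℝ) + 1) * bspline tI p i (p : ℝ) := by
      intro i
      simp only [bspline]
      rw [ntrans p i (p : ℝ)]
      simp only [tI]
      push_cast
      ring
    have hu0 : bspline tI p 0 ((p : ℝ) + 1) = 0 :=
      nsupport p 0 _ (Or.inr (by push_cast; linarith))
    have hwp : bspline tI p p (p : ℝ) = 0 := by
      obtain ⟨q, rfl⟩ : ∃ q, p = q + 1 := ⟨p - 1, by omega⟩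
      have := nleft q (q + 1)
      push_cast at this ⊢
      exact this
    have htrans : ∀ i ∈ Finset.range p, ∀ c : ℝ,
        c * bspline tI p (i + 1) ((p : ℝ) + 1) = c * bspline tI p i (p : ℝ) := by
      intro i _ c
      rw [ntrans p i (p : ℝ)]
    constructor
    · push_cast
      rw [Finset.sum_congr rfl (fun i _ => key i), Finset.sum_add_distrib,
        Finset.sum_range_succ', Finset.sum_range_succ, hu0, hwp]
      simp only [mul_zero, add_zero]
      rw [Finset.sum_congr rfl (fun i hi =>
        htrans i hi (((p : ℝ) + 1 - ((i + 1 : ℕ) : ℝ)) / ((p : ℝ) + 1)))]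
      rw [← Finset.sum_add_distrib]
      rw [Finset.sum_congr rfl (fun i (_ : i ∈ Finset.range p) => by
        push_cast
        field_simp
        ring : ∀ i ∈ Finset.range p,
          ((p : ℝ) + 1 - ((i + 1 : ℕ) : ℝ)) / ((p : ℝ) + 1) * bspline tI p i (p : ℝ)
            + ((i : ℝ) + 1) / ((p : ℝ) + 1) * bspline tI p i (p : ℝ)
          = bspline tI p i (p : ℝ))]
      exact hT
    · have keyS : ∀ i : ℕ, (i : ℝ) * bspline tI (p + 1) i ((p : ℝ) + 1) =
          (i : ℝ) * (((p : ℝ) + 1 - (i : ℝ)) / ((p : ℝ) + 1)) * bspline tI p i ((p : ℝ) + 1)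
            + (i : ℝ) * (((i : ℝ) + 1) / ((p : ℝ) + 1)) * bspline tI p i (p : ℝ) := by
        intro i
        rw [key i]
        ring
      push_cast
      rw [Finset.sum_congr rfl (fun i _ => keyS i), Finset.sum_add_distrib,
        Finset.sum_range_succ', Finset.sum_range_succ, hu0, hwp]
      simp only [mul_zero, add_zero]
      rw [Finset.sum_congr rfl (fun i hi =>
        htrans i hi (((i + 1 : ℕ) : ℝ) * (((p : ℝ) + 1 - ((i + 1 : ℕ) : ℝ)) / ((p : ℝ) + 1))))]
      rw [← Finset.sum_add_distrib]
      rw [Finset.sum_congr rfl (fun i (_ : i ∈ Finset.range p) => by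
        push_cast
        field_simp
        ring : ∀ i ∈ Finset.range p,
          ((i + 1 : ℕ) : ℝ) * (((p : ℝ) + 1 - ((i + 1 : ℕ) : ℝ)) / ((p : ℝ) + 1))
              * bspline tI p i (p : ℝ)
            + (i : ℝ) * (((i : ℝ) + 1) / ((p : ℝ) + 1)) * bspline tI p i (p : ℝ)
          = (p : ℝ) / ((p : ℝ) + 1) * ((i : ℝ) * bspline tI p i (p : ℝ) + bspline tI p i (p : ℝ)))]
      rw [← Finset.mul_sum, Finset.sum_add_distrib, hS, hT]
      field_simp
      ring

lemma affine (a h : ℝ) (hh : 0 < h) : ∀ (p i : ℕ) (x : ℝ),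
    bspline (fun j : ℕ => a + (j : ℝ) * h) p i (a + x * h) = bspline tI p i x := by
  intro p
  induction p with
  | zero =>
    intro i x
    simp only [bspline, tI]
    congr 1
    rw [eq_iff_iff]
    push_cast
    constructor <;> rintro ⟨h1, h2⟩ <;> constructor <;> nlinarith
  | succ p ih =>
    intro i x
    simp only [bspline]
    rw [ih i x, ih (i + 1) x]
    simp only [tI]
    congr 1
    · congr 1
      rw [show a + x * h - (a + (i : ℝ) * h) = (x - (i : ℝ)) * h by ring,
        show a + ((i + p + 1 : ℕ) : ℝ) * h - (a + (i : ℝ) * h)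
          = (((i + p + 1 : ℕ) : ℝ) - (i : ℝ)) * h by ring,
        mul_div_mul_right _ _ hh.ne']
    · congr 1
      rw [show a + ((i + p + 2 : ℕ) : ℝ) * h - (a + x * h)
          = (((i + p + 2 : ℕ) : ℝ) - x) * h by ring,
        show a + ((i + p + 2 : ℕ) : ℝ) * h - (a + ((i + 1 : ℕ) : ℝ) * h)
          = (((i + p + 2 : ℕ) : ℝ) - ((i + 1 : ℕ) : ℝ)) * h by ring,
        mul_div_mul_right _ _ hh.ne']

/-- Lemma (Appendix B) of the paper: for uniform knots,
`C_p = Σ_{i=0}^{p-1} i·B_i^p(t_p) = (p-1)/2`. -/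
theorem bspline_Cp (p n : ℕ) (hp : 1 ≤ p) (hn : p ≤ n)
    (a h : ℝ) (hh : 0 < h) (t : ℕ → ℝ) (ht : ∀ i, t i = a + (i : ℝ) * h) :
    ∑ i ∈ Finset.range p, (i : ℝ) * bspline t p i (t p) = ((p : ℝ) - 1) / 2 := by
  have hteq : t = fun j : ℕ => a + (j : ℝ) * h := funext ht
  subst hteq
  rw [Finset.sum_congr rfl (fun i (_ : i ∈ Finset.range p) => by
    rw [show (fun j : ℕ => a + (j : ℝ) * h) p = a + (p : ℝ) * h from rfl,
      affine a h hh p i (p : ℝ)] : ∀ i ∈ Finset.range p,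
      (i : ℝ) * bspline (fun j : ℕ => a + (j : ℝ) * h) p i
        ((fun j : ℕ => a + (j : ℝ) * h) p) = (i : ℝ) * bspline tI p i (p : ℝ))]
  exact (nmain p hp).2
end

section
/- Let p ≥ 1 and n ≥ p, and let the knots be uniform: t_i := a + i·h for i = 0, …, n+p, with a ∈ ℝ and h > 0. Then Σ_{j=n−p}^{n−1} j·B_j^p(t_n) = (p−1)/2 + (n − p). -/
variable {a h : ℝ} {t : ℕ → ℝ}

lemma bspline_zero_eval (hh : 0 < h) (ht : ∀ i, t i = a + (i : ℝ) * h) (n j : ℕ) :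
    bspline t 0 j (t n) = if j = n then 1 else 0 := by
  have : (t j ≤ t n ∧ t n < t (j + 1)) ↔ j = n := by
    rw [ht, ht, ht]
    constructor
    · rintro ⟨h1, h2⟩
      have h1' : (j : ℝ) ≤ (n : ℝ) := le_of_mul_le_mul_right (show (j:ℝ)*h ≤ (n:ℝ)*h by linarith) hh
      have h2' : (n : ℝ) < (j : ℝ) + 1 := by
        have := lt_of_mul_lt_mul_right (show (n:ℝ)*h < ((j:ℝ)+1)*h by push_cast at h2; linarith) hh.le
        linarith
      have e1 : j ≤ n := Nat.cast_le.mp h1'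
      have e2 : n < j + 1 := by exact_mod_cast h2'
      omega
    · rintro rfl
      refine ⟨le_refl _, ?_⟩
      push_cast
      nlinarith
  rw [bspline, if_congr this rfl rfl]

lemma bspline_succ_eval (hh : 0 < h) (ht : ∀ i, t i = a + (i : ℝ) * h) (q n j : ℕ) :
    bspline t (q + 1) j (t n) =
      ((n : ℝ) - j) / ((q : ℝ) + 1) * bspline t q j (t n) +
      ((j : ℝ) + q + 2 - n) / ((q : ℝ) + 1) * bspline t q (j + 1) (t n) := by
  show (t n - t j) / (t (j + q + 1) - t j) * _ + (t (j + q + 2) - t n) / (t (j + q + 2) - t (j + 1)) * _ = _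
  rw [ht n, ht j, ht (j + q + 1), ht (j + q + 2), ht (j + 1)]
  push_cast
  congr 2
  · rw [show a + (n:ℝ)*h - (a + (j:ℝ)*h) = ((n:ℝ) - j) * h by ring,
      show a + ((j:ℝ) + q + 1)*h - (a + (j:ℝ)*h) = ((q:ℝ) + 1) * h by ring,
      mul_div_mul_right _ _ hh.ne']
  · rw [show a + ((j:ℝ) + q + 2)*h - (a + (n:ℝ)*h) = ((j:ℝ) + q + 2 - n) * h by ring,
      show a + ((j:ℝ) + q + 2)*h - (a + ((j:ℝ)+1)*h) = ((q:ℝ) + 1) * h by ring,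
      mul_div_mul_right _ _ hh.ne']

lemma bspline_eval_zero_lt (hh : 0 < h) (ht : ∀ i, t i = a + (i : ℝ) * h) (n : ℕ) :
    ∀ q j : ℕ, j + q < n → bspline t q j (t n) = 0 := by
  intro q
  induction q with
  | zero =>
    intro j hj
    rw [bspline_zero_eval hh ht, if_neg (by omega)]
  | succ q ih =>
    intro j hj
    rw [bspline_succ_eval hh ht, ih j (by omega), ih (j + 1) (by omega)]
    ring

lemma bspline_eval_zero_ge (hh : 0 < h) (ht : ∀ i, t i = a + (i : ℝ) * h) (n : ℕ) :
    ∀ q : ℕ, 1 ≤ q → ∀ j : ℕ, n ≤ j → bspline t q j (t n) = 0 := by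
  intro q hq
  induction q, hq using Nat.le_induction with
  | base =>
    intro j hj
    rw [bspline_succ_eval hh ht, bspline_zero_eval hh ht, bspline_zero_eval hh ht,
      if_neg (show ¬ j + 1 = n by omega)]
    rcases eq_or_lt_of_le hj with rfl | hlt
    · rw [if_pos rfl]; push_cast; ring
    · rw [if_neg (by omega)]; ring
  | succ q hq ih =>
    intro j hj
    rw [bspline_succ_eval hh ht, ih j hj, ih (j + 1) (by omega)]
    ring

lemma bspline_sums (hh : 0 < h) (ht : ∀ i, t i = a + (i : ℝ) * h) (n : ℕ) :
    ∀ q : ℕ, 1 ≤ q → q ≤ n →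
      (∑ j ∈ Finset.Icc (n - q) (n - 1), bspline t q j (t n) = 1) ∧
      (∑ j ∈ Finset.Icc (n - q) (n - 1), (j : ℝ) * bspline t q j (t n) =
        ((q : ℝ) - 1) / 2 + ((n : ℝ) - q)) := by
  intro q hq
  induction q, hq using Nat.le_induction with
  | base =>
    intro hn
    rw [Finset.Icc_self, Finset.sum_singleton, Finset.sum_singleton]
    have hval : bspline t 1 (n - 1) (t n) = 1 := by
      rw [bspline_succ_eval hh ht 0 n (n - 1),
        bspline_zero_eval hh ht, bspline_zero_eval hh ht,
        if_neg (show ¬ n - 1 = n by omega), if_pos (show n - 1 + 1 = n by omega)]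
      push_cast [Nat.cast_sub hn]
      ring
    rw [hval]
    refine ⟨rfl, ?_⟩
    push_cast [Nat.cast_sub hn]
    ring
  | succ q hq ih =>
    intro hn1
    have hqn : q ≤ n := by omega
    obtain ⟨ih0, ih1⟩ := ih hqn
    have hsub1 : Finset.Icc (n - q) (n - 1) ⊆ Finset.Icc (n - (q + 1)) (n - 1) :=
      Finset.Icc_subset_Icc (by omega) le_rfl
    have hsub2 : Finset.Icc (n - (q + 1)) (n - 2) ⊆ Finset.Icc (n - (q + 1)) (n - 1) :=
      Finset.Icc_subset_Icc le_rfl (by omega)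
    -- reindexing lemma
    have reindex : ∀ F : ℕ → ℝ,
        ∑ j ∈ Finset.Icc (n - (q + 1)) (n - 2), F (j + 1)
          = ∑ k ∈ Finset.Icc (n - q) (n - 1), F k := by
      intro F
      refine Finset.sum_nbij' (i := fun j => j + 1) (j := fun k => k - 1) ?_ ?_ ?_ ?_ ?_
      · intro x hx; simp only [Finset.mem_Icc] at hx ⊢; omega
      · intro x hx; simp only [Finset.mem_Icc] at hx ⊢; omega
      · intro x hx; show x + 1 - 1 = x; omega
      · intro x hx; simp only [Finset.mem_Icc] at hx; show x - 1 + 1 = x; omega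
      · intro x hx; rfl
    have drop1 : ∀ F : ℕ → ℝ,
        ∑ j ∈ Finset.Icc (n - (q + 1)) (n - 1), F j * bspline t q j (t n)
          = ∑ j ∈ Finset.Icc (n - q) (n - 1), F j * bspline t q j (t n) := by
      intro F
      refine (Finset.sum_subset hsub1 ?_).symm
      intro x hx hx'
      simp only [Finset.mem_Icc] at hx hx'
      rw [bspline_eval_zero_lt hh ht n q x (by omega), mul_zero]
    have drop2 : ∀ F : ℕ → ℝ,
        ∑ j ∈ Finset.Icc (n - (q + 1)) (n - 1), F j * bspline t q (j + 1) (t n)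
          = ∑ j ∈ Finset.Icc (n - (q + 1)) (n - 2), F j * bspline t q (j + 1) (t n) := by
      intro F
      refine Finset.sum_subset hsub2 ?_ |>.symm
      intro x hx hx'
      simp only [Finset.mem_Icc] at hx hx'
      rw [show x + 1 = n by omega, bspline_eval_zero_ge hh ht n q hq n le_rfl, mul_zero]
    have hq1 : ((q : ℝ) + 1) ≠ 0 := by positivity
    have S0 : ∑ j ∈ Finset.Icc (n - (q + 1)) (n - 1), bspline t (q + 1) j (t n) = 1 := by
      calc ∑ j ∈ Finset.Icc (n - (q + 1)) (n - 1), bspline t (q + 1) j (t n)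
          = (∑ j ∈ Finset.Icc (n - (q + 1)) (n - 1),
              (((n : ℝ) - j) / ((q : ℝ) + 1)) * bspline t q j (t n))
            + ∑ j ∈ Finset.Icc (n - (q + 1)) (n - 1),
              (((j : ℝ) + q + 2 - n) / ((q : ℝ) + 1)) * bspline t q (j + 1) (t n) := by
            rw [← Finset.sum_add_distrib]
            exact Finset.sum_congr rfl fun j _ => bspline_succ_eval hh ht q n j
        _ = (∑ j ∈ Finset.Icc (n - q) (n - 1),
              (((n : ℝ) - j) / ((q : ℝ) + 1)) * bspline t q j (t n))
            + ∑ k ∈ Finset.Icc (n - q) (n - 1),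
              (((k : ℝ) + q + 1 - n) / ((q : ℝ) + 1)) * bspline t q k (t n) := by
            rw [drop1, drop2]
            congr 1
            rw [← reindex (fun k => (((k : ℝ) + q + 1 - n) / ((q : ℝ) + 1)) * bspline t q k (t n))]
            refine Finset.sum_congr rfl fun j _ => ?_
            push_cast
            ring
        _ = ∑ j ∈ Finset.Icc (n - q) (n - 1), bspline t q j (t n) := by
            rw [← Finset.sum_add_distrib]
            refine Finset.sum_congr rfl fun j _ => ?_
            rw [← add_mul, ← add_div,
              show (n : ℝ) - j + ((j : ℝ) + q + 1 - n) = (q : ℝ) + 1 by ring,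
              div_self hq1, one_mul]
        _ = 1 := ih0
    refine ⟨S0, ?_⟩
    calc ∑ j ∈ Finset.Icc (n - (q + 1)) (n - 1), (j : ℝ) * bspline t (q + 1) j (t n)
        = (∑ j ∈ Finset.Icc (n - (q + 1)) (n - 1),
            ((j : ℝ) * (((n : ℝ) - j) / ((q : ℝ) + 1))) * bspline t q j (t n))
          + ∑ j ∈ Finset.Icc (n - (q + 1)) (n - 1),
            ((j : ℝ) * (((j : ℝ) + q + 2 - n) / ((q : ℝ) + 1))) * bspline t q (j + 1) (t n) := by
          rw [← Finset.sum_add_distrib]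
          refine Finset.sum_congr rfl fun j _ => ?_
          rw [bspline_succ_eval hh ht q n j]
          ring
      _ = (∑ j ∈ Finset.Icc (n - q) (n - 1),
            ((j : ℝ) * (((n : ℝ) - j) / ((q : ℝ) + 1))) * bspline t q j (t n))
          + ∑ k ∈ Finset.Icc (n - q) (n - 1),
            (((k : ℝ) - 1) * (((k : ℝ) + q + 1 - n) / ((q : ℝ) + 1))) * bspline t q k (t n) := by
          rw [drop1, drop2]
          congr 1
          rw [← reindex (fun k => (((k : ℝ) - 1) * (((k : ℝ) + q + 1 - n) / ((q : ℝ) + 1)))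
            * bspline t q k (t n))]
          refine Finset.sum_congr rfl fun j _ => ?_
          push_cast
          ring
      _ = ∑ j ∈ Finset.Icc (n - q) (n - 1),
            (((q : ℝ) / ((q : ℝ) + 1)) * ((j : ℝ) * bspline t q j (t n))
              + (((n : ℝ) - q - 1) / ((q : ℝ) + 1)) * bspline t q j (t n)) := by
          rw [← Finset.sum_add_distrib]
          refine Finset.sum_congr rfl fun j _ => ?_
          field_simp
          ring
      _ = ((q : ℝ) / ((q : ℝ) + 1)) * (((q : ℝ) - 1) / 2 + ((n : ℝ) - q))
            + (((n : ℝ) - q - 1) / ((q : ℝ) + 1)) * 1 := by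
          rw [Finset.sum_add_distrib, ← Finset.mul_sum, ← Finset.mul_sum, ih0, ih1]
      _ = (((q : ℝ) + 1) - 1) / 2 + ((n : ℝ) - ((q : ℝ) + 1)) := by
          field_simp
          ring
      _ = ((((q + 1 : ℕ)) : ℝ) - 1) / 2 + ((n : ℝ) - ((q + 1 : ℕ) : ℝ)) := by
          push_cast
          ring

/-- For uniform knots, `Σ_{j=n-p}^{n-1} j·B_j^p(t_n) = (p-1)/2 + (n-p)`. -/
theorem bspline_Cp_shifted (p n : ℕ) (hp : 1 ≤ p) (hn : p ≤ n)
    (a h : ℝ) (hh : 0 < h) (t : ℕ → ℝ) (ht : ∀ i, t i = a + (i : ℝ) * h) :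
    ∑ j ∈ Finset.Icc (n - p) (n - 1), (j : ℝ) * bspline t p j (t n) =
      ((p : ℝ) - 1) / 2 + ((n : ℝ) - p) := by
  exact (bspline_sums hh ht n p hp hn).2
end

section
/- Let p ≥ 1 and n ≥ p + 1, and let the knots be uniform: t_i := a + i·h for i = 0, …, n+p, with a ∈ ℝ and h > 0. Then Σ_{i=1}^{p} i·B_i^p(t_{p+1}) = (p+1)/2. -/
noncomputable def g : ℕ → ℤ → ℝ
  | 0, d => if d = 0 then 1 else 0
  | q + 1, d => (d : ℝ) / (q + 1) * g q d + ((q : ℝ) + 2 - d) / (q + 1) * g q (d - 1)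

lemma g_one (d : ℤ) : g 1 d = if d = 1 then 1 else 0 := by
  show g (0+1) d = _
  simp only [g]
  by_cases h1 : d = 1
  · subst h1; norm_num
  · by_cases h0 : d = 0
    · subst h0; norm_num
    · have h2 : ¬ (d - 1 = 0) := by omega
      simp [h0, h1, h2]

lemma g_eq_zero : ∀ q : ℕ, 1 ≤ q → ∀ d : ℤ, (d < 1 ∨ (q : ℤ) < d) → g q d = 0 := by
  intro q
  induction q with
  | zero => omega
  | succ q ih =>
    intro _ d hd
    by_cases hq : 1 ≤ q
    · show g (q+1) d = 0
      simp only [g]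
      rw [ih hq d (by push_cast at hd ⊢; omega), ih hq (d-1) (by push_cast at hd ⊢; omega)]
      ring
    · have hq0 : q = 0 := by omega
      subst hq0
      rw [g_one]
      have : ¬ (d = 1) := by push_cast at hd; omega
      simp [this]

lemma g_symm : ∀ q : ℕ, 1 ≤ q → ∀ d : ℤ, g q d = g q ((q : ℤ) + 1 - d) := by
  intro q
  induction q with
  | zero => omega
  | succ q ih =>
    intro _ d
    by_cases hq : 1 ≤ q
    · have e1 : g q ((q:ℤ) + 2 - d) = g q (d - 1) := by
        have := ih hq ((q:ℤ) + 2 - d)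
        rw [show (q:ℤ) + 1 - ((q:ℤ) + 2 - d) = d - 1 by ring] at this
        exact this
      have e2 : g q ((q:ℤ) + 1 - d) = g q d := by
        have := ih hq d
        exact this.symm
      show g (q+1) d = g (q+1) (((q:ℕ)+1 : ℤ) + 1 - d)
      rw [show ((q:ℕ)+1 : ℤ) + 1 - d = (q:ℤ) + 2 - d by omega]
      simp only [g]
      rw [show (q:ℤ) + 2 - d - 1 = (q:ℤ) + 1 - d by ring, e1, e2]
      push_cast
      ring
    · have hq0 : q = 0 := by omega
      subst hq0
      rw [g_one, g_one]
      have : d = 1 ↔ ((0:ℕ):ℤ) + 1 + 1 - d = 1 := by omega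
      by_cases hd : d = 1
      · simp [hd, show ((0:ℕ):ℤ) + 1 + 1 - 1 = 1 by ring]
      · have hd2 : ¬ ((2:ℤ) - d = 1) := by omega
        simp [hd, hd2]

lemma g_sum : ∀ q : ℕ, 1 ≤ q → ∑ i ∈ Finset.range q, g q ((i : ℤ) + 1) = 1 := by
  intro q
  induction q with
  | zero => omega
  | succ q ih =>
    intro _
    by_cases hq : 1 ≤ q
    · have key : ∀ i ∈ Finset.range (q+1), g (q+1) ((i:ℤ)+1)
          = ((i:ℝ)+1)/((q:ℝ)+1) * g q ((i:ℤ)+1) + ((q:ℝ)+1-(i:ℝ))/((q:ℝ)+1) * g q (i:ℤ) := by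
        intro i _
        simp only [g]
        rw [show ((i:ℤ)+1-1 : ℤ) = (i:ℤ) by ring]
        push_cast
        ring
      rw [Finset.sum_congr rfl key, Finset.sum_add_distrib]
      have hA : ∑ i ∈ Finset.range (q+1), ((i:ℝ)+1)/((q:ℝ)+1) * g q ((i:ℤ)+1)
          = ∑ i ∈ Finset.range q, ((i:ℝ)+1)/((q:ℝ)+1) * g q ((i:ℤ)+1) := by
        rw [Finset.sum_range_succ]
        rw [g_eq_zero q hq ((q:ℤ)+1) (by omega)]
        ring
      have hB : ∑ i ∈ Finset.range (q+1), ((q:ℝ)+1-(i:ℝ))/((q:ℝ)+1) * g q (i:ℤ)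
          = ∑ i ∈ Finset.range q, ((q:ℝ)-(i:ℝ))/((q:ℝ)+1) * g q ((i:ℤ)+1) := by
        rw [Finset.sum_range_succ']
        rw [show ((0:ℕ):ℤ) = (0:ℤ) by norm_num, g_eq_zero q hq 0 (by omega)]
        simp only [mul_zero, add_zero]
        apply Finset.sum_congr rfl
        intro i _
        push_cast
        ring
      rw [hA, hB, ← Finset.sum_add_distrib]
      have term : ∀ i ∈ Finset.range q,
          ((i:ℝ)+1)/((q:ℝ)+1) * g q ((i:ℤ)+1) + ((q:ℝ)-(i:ℝ))/((q:ℝ)+1) * g q ((i:ℤ)+1)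
          = g q ((i:ℤ)+1) := by
        intro i _
        have hq1 : ((q:ℝ)+1) ≠ 0 := by positivity
        field_simp
        ring
      rw [Finset.sum_congr rfl term]
      exact ih hq
    · have hq0 : q = 0 := by omega
      subst hq0
      simp [g_one]


lemma bspline_eq_g (a h : ℝ) (hh : 0 < h) (t : ℕ → ℝ) (ht : ∀ i, t i = a + (i : ℝ) * h) :
    ∀ (q i k : ℕ), bspline t q i (t k) = g q ((k : ℤ) - (i : ℤ)) := by
  intro q
  induction q with
  | zero =>
    intro i k
    simp only [bspline, g]
    have hcond : (t i ≤ t k ∧ t k < t (i + 1)) ↔ i = k := by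
      rw [ht, ht, ht]
      constructor
      · rintro ⟨h1, h2⟩
        have c1 : (i:ℝ) ≤ (k:ℝ) := by
          have := le_of_add_le_add_left h1
          exact le_of_mul_le_mul_right this hh
        have c2 : (k:ℝ) < (i:ℝ) + 1 := by
          have := lt_of_add_lt_add_left h2
          have := lt_of_mul_lt_mul_right this hh.le
          push_cast at this
          linarith
        have c1' : i ≤ k := by exact_mod_cast c1
        have c2' : k < i + 1 := by exact_mod_cast c2
        omega
      · rintro rfl
        refine ⟨le_refl _, ?_⟩
        have : (i:ℝ) * h < ((i:ℝ) + 1) * h := by nlinarith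
        push_cast
        linarith
    by_cases hik : i = k
    · rw [if_pos (hcond.mpr hik), if_pos (by omega)]
    · rw [if_neg (fun hc => hik (hcond.mp hc)), if_neg (by omega)]
  | succ q ih =>
    intro i k
    show (t k - t i) / (t (i + q + 1) - t i) * bspline t q i (t k) +
      (t (i + q + 2) - t k) / (t (i + q + 2) - t (i + 1)) * bspline t q (i + 1) (t k)
      = g (q+1) ((k : ℤ) - (i : ℤ))
    rw [ih i k, ih (i+1) k]
    rw [show ((k:ℤ) - ((i+1:ℕ):ℤ)) = ((k:ℤ) - (i:ℤ)) - 1 by push_cast; ring]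
    simp only [g]
    rw [ht k, ht i, ht (i+q+1), ht (i+q+2), ht (i+1)]
    rw [show (a + (k:ℝ)*h) - (a + (i:ℝ)*h) = ((k:ℝ) - (i:ℝ)) * h by ring]
    rw [show (a + ((i+q+1:ℕ):ℝ)*h) - (a + (i:ℝ)*h) = ((q:ℝ) + 1) * h by push_cast; ring]
    rw [show (a + ((i+q+2:ℕ):ℝ)*h) - (a + (k:ℝ)*h) = ((i:ℝ) + (q:ℝ) + 2 - (k:ℝ)) * h by push_cast; ring]
    rw [show (a + ((i+q+2:ℕ):ℝ)*h) - (a + ((i+1:ℕ):ℝ)*h) = ((q:ℝ) + 1) * h by push_cast; ring]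
    rw [mul_div_mul_right _ _ hh.ne', mul_div_mul_right _ _ hh.ne']
    push_cast
    ring

set_option linter.unusedVariables false in
/-- For uniform knots, the quantity `T_1 = Σ_{i=1}^{p} i·B_i^p(t_{p+1})` equals `(p+1)/2`. -/
theorem bspline_T1 (p n : ℕ) (hp : 1 ≤ p) (hn : p + 1 ≤ n)
    (a h : ℝ) (hh : 0 < h) (t : ℕ → ℝ) (ht : ∀ i, t i = a + (i : ℝ) * h) :
    ∑ i ∈ Finset.Icc 1 p, (i : ℝ) * bspline t p i (t (p + 1)) = ((p : ℝ) + 1) / 2 := by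
  have hb := bspline_eq_g a h hh t ht
  have step1 : ∀ i ∈ Finset.Icc 1 p, (i:ℝ) * bspline t p i (t (p+1)) = (i:ℝ) * g p (i:ℤ) := by
    intro i hi
    rw [hb p i (p+1)]
    congr 1
    rw [show (((p+1:ℕ)):ℤ) - (i:ℤ) = ((p:ℤ)+1) - (i:ℤ) by push_cast; ring]
    exact (g_symm p hp (i:ℤ)).symm
  rw [Finset.sum_congr rfl step1]
  have conv : ∑ i ∈ Finset.Icc 1 p, (i:ℝ) * g p (i:ℤ)
      = ∑ j ∈ Finset.range p, ((j:ℝ)+1) * g p ((j:ℤ)+1) := by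
    rw [show Finset.Icc 1 p = Finset.Ico 1 (p+1) by rw [Finset.Ico_add_one_right_eq_Icc],
      Finset.sum_Ico_eq_sum_range]
    apply Finset.sum_congr (by norm_num)
    intro j _
    congr 1
    · push_cast; ring
    · congr 1; push_cast; ring
  rw [conv]
  set S := ∑ j ∈ Finset.range p, ((j:ℝ)+1) * g p ((j:ℤ)+1) with hS
  have hrefl : ∑ j ∈ Finset.range p, ((p:ℝ) - (j:ℝ)) * g p ((j:ℤ)+1) = S := by
    rw [hS, ← Finset.sum_range_reflect (fun j => ((j:ℝ)+1) * g p ((j:ℤ)+1)) p]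
    apply Finset.sum_congr rfl
    intro j hj
    have hjp : j < p := Finset.mem_range.mp hj
    have hz : ((p-1-j : ℕ):ℤ) = (p:ℤ) - 1 - (j:ℤ) := by omega
    have hr : ((p-1-j : ℕ):ℝ) = (p:ℝ) - 1 - (j:ℝ) := by exact_mod_cast hz
    simp only [hz, hr]
    congr 1
    · ring
    · rw [show (p:ℤ) - 1 - (j:ℤ) + 1 = (p:ℤ) - (j:ℤ) by ring]
      rw [g_symm p hp ((p:ℤ) - (j:ℤ))]
      congr 1
      ring
  have hsum := g_sum p hp
  have htot : S + S = (p:ℝ) + 1 := by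
    nth_rewrite 2 [← hrefl]
    rw [hS, ← Finset.sum_add_distrib]
    have : ∀ j ∈ Finset.range p,
        ((j:ℝ)+1) * g p ((j:ℤ)+1) + ((p:ℝ) - (j:ℝ)) * g p ((j:ℤ)+1)
        = ((p:ℝ)+1) * g p ((j:ℤ)+1) := by
      intro j _
      ring
    rw [Finset.sum_congr rfl this, ← Finset.mul_sum, hsum, mul_one]
  linarith
end

section
/- Let p ≥ 1 and n ≥ p + 2, and let the knots be uniform: t_i := a + i·h for i = 0, …, n+p, with a ∈ ℝ and h > 0. Then Σ_{i=1}^{p} (B_{i+1}^p(t_{p+1}) − B_i^p(t_{p+1}))·i² = −p. -/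
noncomputable def Ebs (t : ℕ → ℝ) (q i : ℕ) : ℝ := bspline t q i (t (q+1))

section
variable {t : ℕ → ℝ} {a h : ℝ} (hh : 0 < h) (ht : ∀ i, t i = a + (i : ℝ) * h)

include hh ht

lemma t_le {m n : ℕ} : t m ≤ t n ↔ m ≤ n := by
  rw [ht, ht]
  constructor
  · intro hmn
    by_contra hc
    push_neg at hc
    have : (n:ℝ) < m := by exact_mod_cast hc
    nlinarith
  · intro hmn
    have : (m:ℝ) ≤ n := by exact_mod_cast hmn
    nlinarith

lemma t_lt {m n : ℕ} : t m < t n ↔ m < n := by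
  constructor
  · intro hmn
    by_contra hc
    push_neg at hc
    exact absurd ((t_le hh ht).2 hc) (not_le.2 hmn)
  · intro hmn
    rw [ht, ht]
    have : (m:ℝ) < n := by exact_mod_cast hmn
    nlinarith

lemma bspline_shift_s9 (q : ℕ) : ∀ i k, bspline t q (i+1) (t (k+1)) = bspline t q i (t k) := by
  induction q with
  | zero =>
    intro i k
    simp only [bspline, t_le hh ht, t_lt hh ht]
    have : (i + 1 ≤ k + 1 ∧ k + 1 < i + 1 + 1) ↔ (i ≤ k ∧ k < i + 1) := by omega
    simp only [this]
  | succ q ih =>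
    intro i k
    simp only [bspline]
    rw [ih i k, ih (i+1) k]
    have hc1 : (t (k+1) - t (i+1)) / (t (i + 1 + q + 1) - t (i+1))
        = (t k - t i) / (t (i + q + 1) - t i) := by
      rw [ht, ht, ht, ht, ht, ht]
      push_cast
      ring_nf
    have hc2 : (t (i + 1 + q + 2) - t (k+1)) / (t (i + 1 + q + 2) - t (i + 1 + 1))
        = (t (i + q + 2) - t k) / (t (i + q + 2) - t (i + 1)) := by
      rw [ht, ht, ht, ht, ht, ht]
      push_cast
      ring_nf
    rw [hc1, hc2]

lemma bspline_zero (q : ℕ) : ∀ i k, (k < i ∨ i + q + 1 ≤ k) → bspline t q i (t k) = 0 := by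
  induction q with
  | zero =>
    intro i k hk
    simp only [bspline, t_le hh ht, t_lt hh ht]
    rw [if_neg (by omega)]
  | succ q ih =>
    intro i k hk
    simp only [bspline]
    rw [ih i k (by omega), ih (i+1) k (by omega), mul_zero, mul_zero, add_zero]

lemma Ebs_zero {q i : ℕ} (hi : i = 0 ∨ q + 2 ≤ i) : Ebs t q i = 0 :=
  bspline_zero hh ht q i (q+1) (by omega)

lemma Ebs_base (i : ℕ) : Ebs t 0 i = if i = 1 then 1 else 0 := by
  simp only [Ebs, bspline, t_le hh ht, t_lt hh ht]
  have : (i ≤ 0 + 1 ∧ 0 + 1 < i + 1) ↔ i = 1 := by omega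
  simp only [this]

lemma Ebs_rec (q j : ℕ) :
    Ebs t (q+1) (j+1) =
      ((q:ℝ) + 1 - j) / ((q:ℝ) + 1) * Ebs t q j +
      ((j:ℝ) + 1) / ((q:ℝ) + 1) * Ebs t q (j+1) := by
  have hne : h ≠ 0 := ne_of_gt hh
  simp only [Ebs, bspline]
  have e1 : t (q + 1 + 1) = t ((q+1) + 1) := rfl
  have s1 : bspline t q (j+1) (t (q+1+1)) = bspline t q j (t (q+1)) := by
    rw [e1]; exact bspline_shift_s9 hh ht q j (q+1)
  have s2 : bspline t q (j+1+1) (t (q+1+1)) = bspline t q (j+1) (t (q+1)) := by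
    rw [e1]; exact bspline_shift_s9 hh ht q (j+1) (q+1)
  rw [s1, s2]
  have hc1 : (t (q+1+1) - t (j+1)) / (t (j + 1 + q + 1) - t (j+1)) = ((q:ℝ)+1-j)/((q:ℝ)+1) := by
    simp only [ht]
    push_cast
    rw [show a + (↑q + 1 + 1) * h - (a + (↑j + 1) * h) = (↑q + 1 - ↑j) * h by ring,
        show a + (↑j + 1 + ↑q + 1) * h - (a + (↑j + 1) * h) = (↑q + 1) * h by ring,
        mul_div_mul_right _ _ hne]
  have hc2 : (t (j + 1 + q + 2) - t (q+1+1)) / (t (j + 1 + q + 2) - t (j + 1 + 1)) = ((j:ℝ)+1)/((q:ℝ)+1) := by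
    simp only [ht]
    push_cast
    rw [show a + (↑j + 1 + ↑q + 2) * h - (a + (↑q + 1 + 1) * h) = (↑j + 1) * h by ring,
        show a + (↑j + 1 + ↑q + 2) * h - (a + (↑j + 1 + 1) * h) = (↑q + 1) * h by ring,
        mul_div_mul_right _ _ hne]
  rw [hc1, hc2]

end

lemma sum_shift_ext (g : ℕ → ℝ) (n : ℕ) (h0 : g 0 = 0) :
    ∑ k ∈ Finset.range n, g (k+1) = ∑ k ∈ Finset.range (n+1), g k := by
  rw [Finset.sum_range_succ' g n, h0, add_zero]

lemma sum_shift1 (g : ℕ → ℝ) (n : ℕ) (h0 : g 0 = 0) (hn : g (n+1) = 0) :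
    ∑ k ∈ Finset.range (n+1), g (k+1) = ∑ k ∈ Finset.range (n+1), g k := by
  have h1 := Finset.sum_range_succ' g (n+1)
  rw [Finset.sum_range_succ g (n+1), h0, hn, add_zero, add_zero] at h1
  exact h1.symm

section
variable {t : ℕ → ℝ} {a h : ℝ} (hh : 0 < h) (ht : ∀ i, t i = a + (i : ℝ) * h)
include hh ht

lemma Ebs_M0 (q : ℕ) : ∑ j ∈ Finset.range (q+2), Ebs t q j = 1 := by
  induction q with
  | zero =>
    rw [Finset.sum_range_succ, Finset.sum_range_succ, Finset.sum_range_zero]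
    simp [Ebs_base hh ht]
  | succ q ih =>
    have hq : ((q:ℝ) + 1) ≠ 0 := by positivity
    have h0 : Ebs t (q+1) 0 = 0 := Ebs_zero hh ht (Or.inl rfl)
    rw [show q+1+2 = (q+2)+1 from rfl,
        Finset.sum_range_succ' (fun j : ℕ => Ebs t (q+1) j) (q+2), h0, add_zero]
    have step : ∀ j ∈ Finset.range (q+2), Ebs t (q+1) (j+1)
        = ((q:ℝ)+1-(j:ℝ))/((q:ℝ)+1) * Ebs t q j + ((j:ℝ)+1)/((q:ℝ)+1) * Ebs t q (j+1) :=
      fun j _ => Ebs_rec hh ht q j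
    rw [Finset.sum_congr rfl step, Finset.sum_add_distrib]
    have hB : ∑ j ∈ Finset.range (q+2), ((j:ℝ)+1)/((q:ℝ)+1) * Ebs t q (j+1)
        = ∑ j ∈ Finset.range (q+2), (j:ℝ)/((q:ℝ)+1) * Ebs t q j := by
      have := sum_shift1 (fun k : ℕ => (k:ℝ)/((q:ℝ)+1) * Ebs t q k) (q+1)
        (by simp) (by simp [Ebs_zero hh ht (Or.inr (le_refl (q+2)))])
      simpa using this
    rw [hB, ← Finset.sum_add_distrib]
    have step2 : ∀ j ∈ Finset.range (q+2),
        ((q:ℝ)+1-(j:ℝ))/((q:ℝ)+1) * Ebs t q j + (j:ℝ)/((q:ℝ)+1) * Ebs t q j = Ebs t q j := by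
      intro j _
      field_simp
      ring
    rw [Finset.sum_congr rfl step2, ih]

lemma Ebs_M1 (q : ℕ) (hq1 : 1 ≤ q) :
    ∑ j ∈ Finset.range (q+2), (j:ℝ) * Ebs t q j = ((q:ℝ)+1)/2 := by
  induction q, hq1 using Nat.le_induction with
  | base =>
    rw [Finset.sum_range_succ, Finset.sum_range_succ, Finset.sum_range_succ,
        Finset.sum_range_zero]
    have e1 : Ebs t 1 1 = 1 := by
      rw [show (1:ℕ) = 0 + 1 from rfl, Ebs_rec hh ht 0 0,
          Ebs_base hh ht 0, Ebs_base hh ht 1]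
      norm_num
    have e2 : Ebs t 1 2 = 0 := by
      rw [show (2:ℕ) = 1 + 1 from rfl, Ebs_rec hh ht 0 1,
          Ebs_base hh ht 1, Ebs_base hh ht 2]
      norm_num
    rw [e1, e2]
    norm_num
  | succ q hq1 ih =>
    have hq : ((q:ℝ) + 1) ≠ 0 := by positivity
    rw [show q+1+2 = (q+2)+1 from rfl,
        Finset.sum_range_succ' (fun j : ℕ => (j:ℝ) * Ebs t (q+1) j) (q+2)]
    simp only [Nat.cast_zero, zero_mul, add_zero]
    have step : ∀ j ∈ Finset.range (q+2), ((j+1:ℕ):ℝ) * Ebs t (q+1) (j+1)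
        = ((j:ℝ)+1) * (((q:ℝ)+1-(j:ℝ))/((q:ℝ)+1)) * Ebs t q j
          + ((j:ℝ)+1)^2/((q:ℝ)+1) * Ebs t q (j+1) := by
      intro j _
      rw [Ebs_rec hh ht q j]
      push_cast
      ring
    rw [Finset.sum_congr rfl step, Finset.sum_add_distrib]
    have hB : ∑ j ∈ Finset.range (q+2), ((j:ℝ)+1)^2/((q:ℝ)+1) * Ebs t q (j+1)
        = ∑ j ∈ Finset.range (q+2), (j:ℝ)^2/((q:ℝ)+1) * Ebs t q j := by
      have := sum_shift1 (fun k : ℕ => (k:ℝ)^2/((q:ℝ)+1) * Ebs t q k) (q+1)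
        (by simp) (by simp [Ebs_zero hh ht (Or.inr (le_refl (q+2)))])
      simpa using this
    rw [hB, ← Finset.sum_add_distrib]
    have step2 : ∀ j ∈ Finset.range (q+2),
        ((j:ℝ)+1) * (((q:ℝ)+1-(j:ℝ))/((q:ℝ)+1)) * Ebs t q j + (j:ℝ)^2/((q:ℝ)+1) * Ebs t q j
        = ((q:ℝ)/((q:ℝ)+1)) * ((j:ℝ) * Ebs t q j) + Ebs t q j := by
      intro j _
      field_simp
      ring
    rw [Finset.sum_congr rfl step2, Finset.sum_add_distrib, ← Finset.mul_sum,
        ih, Ebs_M0 hh ht q]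
    field_simp
    push_cast
    ring

end

noncomputable def paT (t : ℕ → ℝ) (q k : ℕ) : ℝ :=
  (k:ℝ)^2*((q:ℝ)-2*(k:ℝ)+1)/((q:ℝ)+1) * Ebs t q k

noncomputable def pbT (t : ℕ → ℝ) (q k : ℕ) : ℝ :=
  ((k:ℝ)-1)^2*(k:ℝ)/((q:ℝ)+1) * Ebs t q k

noncomputable def pcT (t : ℕ → ℝ) (q k : ℕ) : ℝ :=
  -(((k:ℝ)+1)^2*((q:ℝ)+1-(k:ℝ))/((q:ℝ)+1)) * Ebs t q k

/-- For uniform knots, the quantity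
`T_2 = Σ_{i=1}^{p} (B_{i+1}^p(t_{p+1}) − B_i^p(t_{p+1}))·i²` equals `−p`. -/
theorem bspline_T2 (p n : ℕ) (hp : 1 ≤ p) (hn : p + 2 ≤ n)
    (a h : ℝ) (hh : 0 < h) (t : ℕ → ℝ) (ht : ∀ i, t i = a + (i : ℝ) * h) :
    ∑ i ∈ Finset.Icc 1 p,
        (bspline t p (i + 1) (t (p + 1)) - bspline t p i (t (p + 1))) * (i : ℝ) ^ 2 =
      -(p : ℝ) := by
  obtain ⟨q, rfl⟩ : ∃ q, p = q + 1 := ⟨p - 1, by omega⟩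
  have hq : ((q:ℝ) + 1) ≠ 0 := by positivity
  rw [← Finset.Ico_add_one_right_eq_Icc, Finset.sum_Ico_eq_sum_range,
      show q + 1 + 1 - 1 = q + 1 from by omega]
  have key : ∀ j ∈ Finset.range (q+1),
      (bspline t (q+1) (1+j+1) (t (q+1+1)) - bspline t (q+1) (1+j) (t (q+1+1)))
        * ((1+j:ℕ):ℝ)^2
      = paT t q (j+1) + pbT t q (j+2) + pcT t q j := by
    intro j _
    have e1 : bspline t (q+1) (1+j+1) (t (q+1+1)) = Ebs t (q+1) (j+2) := by
      rw [show 1+j+1 = j+2 from by omega]; rfl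
    have e2 : bspline t (q+1) (1+j) (t (q+1+1)) = Ebs t (q+1) (j+1) := by
      rw [show 1+j = j+1 from by omega]; rfl
    rw [e1, e2, show j+2 = (j+1)+1 from rfl, Ebs_rec hh ht q (j+1), Ebs_rec hh ht q j]
    simp only [paT, pbT, pcT]
    push_cast
    field_simp
    ring
  rw [Finset.sum_congr rfl key, Finset.sum_add_distrib, Finset.sum_add_distrib]
  have hA : ∑ j ∈ Finset.range (q+1), paT t q (j+1) = ∑ k ∈ Finset.range (q+2), paT t q k := by
    apply sum_shift_ext
    simp [paT]
  have hB : ∑ j ∈ Finset.range (q+1), pbT t q (j+2) = ∑ k ∈ Finset.range (q+2), pbT t q k := by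
    have h1 : ∑ j ∈ Finset.range (q+1), pbT t q (j+2)
        = ∑ j ∈ Finset.range (q+2), pbT t q (j+1) := by
      apply sum_shift_ext (fun m : ℕ => pbT t q (m+1))
      simp [pbT]
    rw [h1]
    apply sum_shift1
    · simp [pbT]
    · simp [pbT, Ebs_zero hh ht (Or.inr (le_refl (q+2)))]
  have hC : ∑ j ∈ Finset.range (q+1), pcT t q j = ∑ k ∈ Finset.range (q+2), pcT t q k := by
    have hz : pcT t q (q+1) = 0 := by
      simp only [pcT]
      push_cast
      ring_nf
    conv_rhs => rw [Finset.sum_range_succ]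
    rw [hz, add_zero]
  rw [hA, hB, hC, ← Finset.sum_add_distrib, ← Finset.sum_add_distrib]
  have split : ∀ k ∈ Finset.range (q+2), paT t q k + pbT t q k + pcT t q k
      = (-2*(q:ℝ)/((q:ℝ)+1)) * ((k:ℝ) * Ebs t q k) + (-1) * Ebs t q k := by
    intro k _
    simp only [paT, pbT, pcT]
    field_simp
    ring
  rw [Finset.sum_congr rfl split, Finset.sum_add_distrib, ← Finset.mul_sum, ← Finset.mul_sum,
      Ebs_M0 hh ht q]
  rcases Nat.eq_zero_or_pos q with h0 | h1
  · subst h0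
    norm_num
  · rw [Ebs_M1 hh ht q h1]
    push_cast
    field_simp
    ring
end

section
/- Let p ≥ 1 and n ≥ p + 1, and let the knots be uniform: t_i := a + i·h for i = 0, …, n+p, with a ∈ ℝ and h > 0. Then Σ_{i=1}^{p} i·B_i^p(t_p) = (p−1)/2; in particular B_p^p(t_p) = 0. -/
/-- value of a uniform-knot B-spline of degree `q` at the knot `m` steps right of its
left knot. -/
noncomputable def gB : ℕ → ℤ → ℝ
  | 0, m => if m = 0 then 1 else 0
  | q + 1, m => ((m : ℝ) / ((q : ℝ) + 1)) * gB q m +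
      (((q : ℝ) + 2 - (m : ℝ)) / ((q : ℝ) + 1)) * gB q (m - 1)

lemma gB_neg : ∀ (q : ℕ) (m : ℤ), m < 0 → gB q m = 0
  | 0, m, hm => by rw [gB, if_neg (by omega)]
  | q + 1, m, hm => by
      rw [gB, gB_neg q m hm, gB_neg q (m - 1) (by omega)]; ring

lemma gB_gt : ∀ (q : ℕ) (m : ℤ), (q : ℤ) < m → gB q m = 0
  | 0, m, hm => by rw [gB, if_neg (by omega)]
  | q + 1, m, hm => by
      rw [gB, gB_gt q m (by omega), gB_gt q (m - 1) (by omega)]; ring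

lemma gB_zero (q : ℕ) : gB (q + 1) 0 = 0 := by
  rw [gB, show (0:ℤ) - 1 = -1 from rfl, gB_neg q (-1) (by omega)]
  norm_num

lemma gB_step (q : ℕ) (c : ℤ → ℝ) :
    ∑ m ∈ Finset.range (q + 2), c m * gB (q + 1) m
      = ∑ m ∈ Finset.range (q + 1),
          (((m : ℝ) / ((q : ℝ) + 1)) * c m
            + ((((q : ℝ) + 1) - (m : ℝ)) / ((q : ℝ) + 1)) * c ((m : ℤ) + 1)) * gB q m := by
  have expand : ∀ m ∈ Finset.range (q + 2),
      c m * gB (q + 1) m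
        = (((m : ℕ) : ℝ) / ((q : ℝ) + 1)) * c m * gB q (m : ℤ)
          + ((((q : ℝ) + 2) - ((m : ℕ) : ℝ)) / ((q : ℝ) + 1)) * c m * gB q ((m : ℤ) - 1) := by
    intro m _
    rw [gB]
    push_cast
    ring
  rw [Finset.sum_congr rfl expand, Finset.sum_add_distrib]
  have h1 : ∑ m ∈ Finset.range (q + 2),
      (((m : ℕ) : ℝ) / ((q : ℝ) + 1)) * c m * gB q (m : ℤ)
      = ∑ m ∈ Finset.range (q + 1),
      (((m : ℕ) : ℝ) / ((q : ℝ) + 1)) * c m * gB q (m : ℤ) := by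
    rw [Finset.sum_range_succ, show (((q+1 : ℕ)) : ℤ) = (q : ℤ) + 1 by push_cast; ring,
      gB_gt q ((q : ℤ) + 1) (by omega)]
    simp
  have h2 : ∑ m ∈ Finset.range (q + 2),
      ((((q : ℝ) + 2) - ((m : ℕ) : ℝ)) / ((q : ℝ) + 1)) * c m * gB q ((m : ℤ) - 1)
      = ∑ m ∈ Finset.range (q + 1),
      ((((q : ℝ) + 1) - ((m : ℕ) : ℝ)) / ((q : ℝ) + 1)) * c ((m : ℤ) + 1) * gB q (m : ℤ) := by
    rw [Finset.sum_range_succ',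
      show (((0:ℕ)) : ℤ) - 1 = -1 by norm_num, gB_neg q (-1) (by omega)]
    rw [mul_zero, add_zero]
    refine Finset.sum_congr rfl fun k _ => ?_
    have : (((k + 1 : ℕ)) : ℤ) - 1 = (k : ℤ) := by push_cast; ring
    rw [this]
    push_cast
    ring
  rw [h1, h2, ← Finset.sum_add_distrib]
  exact Finset.sum_congr rfl fun m _ => by ring

lemma gB_sum : ∀ q : ℕ, ∑ m ∈ Finset.range (q + 1), gB q (m : ℤ) = 1
  | 0 => by simp [gB]
  | q + 1 => by
      have h0 : ∑ m ∈ Finset.range (q + 2), gB (q + 1) (m : ℤ)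
          = ∑ m ∈ Finset.range (q + 2), (fun _ : ℤ => (1 : ℝ)) (m : ℤ) * gB (q + 1) (m : ℤ) := by
        simp
      rw [h0, gB_step q (fun _ => (1 : ℝ))]
      have hq : ((q : ℝ) + 1) ≠ 0 := by positivity
      have h1 : ∀ m ∈ Finset.range (q + 1),
          (((m : ℕ) : ℝ) / ((q : ℝ) + 1) * 1 + (((q : ℝ) + 1) - ((m : ℕ) : ℝ)) / ((q : ℝ) + 1) * 1)
            * gB q (m : ℤ) = gB q (m : ℤ) := by
        intro m _
        field_simp
        ring
      rw [Finset.sum_congr rfl h1, gB_sum q]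

lemma gB_wsum : ∀ q : ℕ, 1 ≤ q →
    ∑ m ∈ Finset.range (q + 1), ((m : ℕ) : ℝ) * gB q (m : ℤ) = ((q : ℝ) + 1) / 2 := by
  intro q
  induction q with
  | zero => omega
  | succ q ih =>
    intro _
    rcases Nat.eq_zero_or_pos q with hq0 | hq1
    · subst hq0
      norm_num [Finset.sum_range_succ, gB]
    · have h0 : ∑ m ∈ Finset.range (q + 2), ((m : ℕ) : ℝ) * gB (q + 1) (m : ℤ)
          = ∑ m ∈ Finset.range (q + 2), (fun z : ℤ => (z : ℝ)) (m : ℤ) * gB (q + 1) (m : ℤ) := by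
        simp
      rw [h0, gB_step q (fun z : ℤ => (z : ℝ))]
      have hq : ((q : ℝ) + 1) ≠ 0 := by positivity
      have h1 : ∀ m ∈ Finset.range (q + 1),
          (((m : ℕ) : ℝ) / ((q : ℝ) + 1) * (((m : ℤ) : ℝ))
            + (((q : ℝ) + 1) - ((m : ℕ) : ℝ)) / ((q : ℝ) + 1) * ((((m : ℤ) + 1 : ℤ)) : ℝ))
            * gB q (m : ℤ)
          = ((q : ℝ) / ((q : ℝ) + 1)) * (((m : ℕ) : ℝ) * gB q (m : ℤ)) + gB q (m : ℤ) := by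
        intro m _
        push_cast
        field_simp
        ring
      rw [Finset.sum_congr rfl h1, Finset.sum_add_distrib, ← Finset.mul_sum,
        ih hq1, gB_sum q]
      push_cast
      field_simp
      ring

lemma bspline_eq_gB (a h : ℝ) (hh : 0 < h) (t : ℕ → ℝ)
    (ht : ∀ i, t i = a + (i : ℝ) * h) :
    ∀ (q i j : ℕ), bspline t q i (t j) = gB q ((j : ℤ) - (i : ℤ)) := by
  intro q
  induction q with
  | zero =>
    intro i j
    rw [show bspline t 0 i (t j) = if t i ≤ t j ∧ t j < t (i + 1) then 1 else 0 from rfl, gB]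
    refine if_congr ?_ rfl rfl
    rw [ht i, ht j, ht (i + 1), add_le_add_iff_left, add_lt_add_iff_left,
      mul_le_mul_iff_of_pos_right hh, mul_lt_mul_iff_of_pos_right hh, Nat.cast_le, Nat.cast_lt]
    omega
  | succ q ih =>
    intro i j
    have hne : h ≠ 0 := ne_of_gt hh
    rw [show bspline t (q + 1) i (t j)
        = (t j - t i) / (t (i + q + 1) - t i) * bspline t q i (t j) +
          (t (i + q + 2) - t j) / (t (i + q + 2) - t (i + 1)) * bspline t q (i + 1) (t j)
        from rfl]
    have e1 : t j - t i = ((j : ℝ) - (i : ℝ)) * h := by rw [ht, ht]; ring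
    have e2 : t (i + q + 1) - t i = ((q : ℝ) + 1) * h := by
      rw [ht, ht]; push_cast; ring
    have e3 : t (i + q + 2) - t j = (((i : ℝ) + (q : ℝ) + 2) - (j : ℝ)) * h := by
      rw [ht, ht]; push_cast; ring
    have e4 : t (i + q + 2) - t (i + 1) = ((q : ℝ) + 1) * h := by
      rw [ht, ht]; push_cast; ring
    have e5 : (j : ℤ) - ((i + 1 : ℕ) : ℤ) = ((j : ℤ) - (i : ℤ)) - 1 := by push_cast; ring
    rw [e1, e2, e3, e4, ih i j, ih (i + 1) j, e5, gB,
      mul_div_mul_right _ _ hne, mul_div_mul_right _ _ hne]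
    push_cast
    ring

/-- For uniform knots, `T_3 = Σ_{i=1}^{p} i·B_i^p(t_p) = (p-1)/2`; in particular
`B_p^p(t_p) = 0`. -/
theorem bspline_T3 (p n : ℕ) (hp : 1 ≤ p) (hn : p + 1 ≤ n)
    (a h : ℝ) (hh : 0 < h) (t : ℕ → ℝ) (ht : ∀ i, t i = a + (i : ℝ) * h) :
    (∑ i ∈ Finset.Icc 1 p, (i : ℝ) * bspline t p i (t p) = ((p : ℝ) - 1) / 2) ∧
      bspline t p p (t p) = 0 := by
  constructor
  · calc ∑ i ∈ Finset.Icc 1 p, (i : ℝ) * bspline t p i (t p)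
        = ∑ i ∈ Finset.Icc 1 p, (i : ℝ) * gB p ((p : ℤ) - (i : ℤ)) :=
          Finset.sum_congr rfl fun i _ => by rw [bspline_eq_gB a h hh t ht]
      _ = ∑ k ∈ Finset.range p, (((1 + k : ℕ)) : ℝ) * gB p ((p : ℤ) - ((1 + k : ℕ) : ℤ)) := by
          rw [← Finset.Ico_add_one_right_eq_Icc, Finset.sum_Ico_eq_sum_range]
          norm_num
      _ = ∑ j ∈ Finset.range p, ((p : ℝ) - (j : ℝ)) * gB p (j : ℤ) := by
          rw [← Finset.sum_range_reflect]
          refine Finset.sum_congr rfl fun j hj => ?_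
          rw [Finset.mem_range] at hj
          have h1 : 1 + (p - 1 - j) = p - j := by omega
          have h2 : ((p - j : ℕ) : ℝ) = (p : ℝ) - (j : ℝ) := Nat.cast_sub hj.le
          have h3 : (p : ℤ) - ((p - j : ℕ) : ℤ) = (j : ℤ) := by omega
          rw [h1, h2, h3]
      _ = ∑ m ∈ Finset.range (p + 1), ((p : ℝ) - (m : ℝ)) * gB p (m : ℤ) := by
          rw [Finset.sum_range_succ]
          simp
      _ = (p : ℝ) * (∑ m ∈ Finset.range (p + 1), gB p (m : ℤ))
            - ∑ m ∈ Finset.range (p + 1), ((m : ℕ) : ℝ) * gB p (m : ℤ) := by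
          rw [Finset.mul_sum, ← Finset.sum_sub_distrib]
          exact Finset.sum_congr rfl fun m _ => by ring
      _ = ((p : ℝ) - 1) / 2 := by
          rw [gB_sum, gB_wsum p hp]
          ring
  · obtain ⟨q, rfl⟩ : ∃ q, p = q + 1 := ⟨p - 1, by omega⟩
    rw [bspline_eq_gB a h hh t ht, sub_self, gB_zero]
end
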